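/- arXiv:1303.5202 — 4 statements merged into one kernel-verified Lean document; each statement's English description precedes it below -/
import Mathlib

section
/- Let φ be a norm on ℝ² and let E ⊆ ℝ² be a convex open set satisfying the rW_φ-condition for some r > 0. Then E = E^r, i.e. E coincides with the union of all Wulff balls of radius r contained in E. -/
open MeasureTheory Set ENNReal Filter

noncomputable section

/-- `φ` is a norm on `ℝⁿ` (represented as `Fin n → ℝ`). -/
structure IsNorm {n : ℕ} (φ : (Fin n → ℝ) → ℝ) : Prop where
  nonneg : ∀ x, 0 ≤ φ x
  eq_zero_iff : ∀ x, φ x = 0 ↔ x = 0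
  smul_eq : ∀ (a : ℝ) (x : Fin n → ℝ), φ (a • x) = |a| * φ x
  add_le : ∀ x y, φ (x + y) ≤ φ x + φ y

/-- The divergence of a vector field `η : ℝⁿ → ℝⁿ`. -/
def diverg {n : ℕ} (η : (Fin n → ℝ) → (Fin n → ℝ)) (x : Fin n → ℝ) : ℝ :=
  ∑ i, fderiv ℝ η x (Pi.single i 1) i

/-- The anisotropic total variation `∫ φ*(Du)` of `u : ℝⁿ → ℝ`:
`sup { ∫ u div η dx : η ∈ C¹_c(ℝⁿ;ℝⁿ), φ(η(x)) ≤ 1 ∀ x }`, as an extended real. -/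
def anisoTV {n : ℕ} (φ : (Fin n → ℝ) → ℝ) (u : (Fin n → ℝ) → ℝ) : ℝ≥0∞ :=
  ⨆ η ∈ {η : (Fin n → ℝ) → (Fin n → ℝ) |
      ContDiff ℝ 1 η ∧ HasCompactSupport η ∧ ∀ x, φ (η x) ≤ 1},
    ENNReal.ofReal (∫ x, u x * diverg η x)

/-- `u ∈ BV(ℝⁿ)` (with respect to the anisotropic total variation). -/
def IsBV {n : ℕ} (φ : (Fin n → ℝ) → ℝ) (u : (Fin n → ℝ) → ℝ) : Prop :=
  Integrable u volume ∧ anisoTV φ u ≠ ⊤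

/-- `u` is admissible for problem (1): `u ∈ BV(ℝⁿ)`, `u = 0` a.e. outside `Ω`,
`u` is a.e. `ℕ`-valued, and `∫_Ω u = m`. -/
def Admissible {n : ℕ} (φ : (Fin n → ℝ) → ℝ) (Ω : Set (Fin n → ℝ)) (m : ℝ)
    (u : (Fin n → ℝ) → ℝ) : Prop :=
  IsBV φ u ∧ (∀ᵐ x ∂volume, x ∉ Ω → u x = 0) ∧
    (∀ᵐ x ∂volume, ∃ k : ℕ, u x = k) ∧ (∫ x in Ω, u x) = m

/-- `u` is a minimizer of problem (1). -/
def IsMinimizer {n : ℕ} (φ : (Fin n → ℝ) → ℝ) (Ω : Set (Fin n → ℝ)) (m : ℝ)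
    (u : (Fin n → ℝ) → ℝ) : Prop :=
  Admissible φ Ω m u ∧ ∀ v, Admissible φ Ω m v → anisoTV φ u ≤ anisoTV φ v

/-- The anisotropic perimeter `P_φ(E)` of a set `E ⊆ ℝⁿ`. -/
def anisoPerimeter {n : ℕ} (φ : (Fin n → ℝ) → ℝ) (E : Set (Fin n → ℝ)) : ℝ≥0∞ :=
  anisoTV φ (E.indicator (1 : (Fin n → ℝ) → ℝ))

/-- The Wulff ball `W_r(x) = {y : φ(y-x) < r}`. -/
def wulffBall {n : ℕ} (φ : (Fin n → ℝ) → ℝ) (x : Fin n → ℝ) (r : ℝ) : Set (Fin n → ℝ) :=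
  {y | φ (y - x) < r}

/-- `E` satisfies the `rW_φ`-condition. -/
def rWCond {n : ℕ} (φ : (Fin n → ℝ) → ℝ) (E : Set (Fin n → ℝ)) (r : ℝ) : Prop :=
  ∀ x ∈ frontier E, ∃ y, wulffBall φ y r ⊆ E ∧ x ∈ frontier (wulffBall φ y r)

/-- The Wulff plaquette `E^r`, the union of all Wulff balls of radius `r` contained
in `E` (with `E^0 = E`). -/
def plaquette {n : ℕ} (φ : (Fin n → ℝ) → ℝ) (E : Set (Fin n → ℝ)) (r : ℝ) :
    Set (Fin n → ℝ) :=
  if r = 0 then E else ⋃ (x) (_ : wulffBall φ x r ⊆ E), wulffBall φ x r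

/-- `R_Ω`: the maximal `R > 0` such that some Wulff ball of radius `R` is contained in `Ω`. -/
def maxInradius {n : ℕ} (φ : (Fin n → ℝ) → ℝ) (Ω : Set (Fin n → ℝ)) : ℝ :=
  sSup {R | 0 < R ∧ ∃ x, wulffBall φ x R ⊆ Ω}

/-- `r_Ω`: the maximal `r > 0` such that `Ω` satisfies the `rW_φ`-condition
(`0` if there is none, since `sSup ∅ = 0`). -/
def maxRollRadius {n : ℕ} (φ : (Fin n → ℝ) → ℝ) (Ω : Set (Fin n → ℝ)) : ℝ :=
  sSup {r | 0 < r ∧ rWCond φ Ω r}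

/-- The set of points of Lebesgue density `1` of `E`. -/
def densityPoints {n : ℕ} (E : Set (Fin n → ℝ)) : Set (Fin n → ℝ) :=
  {x | Tendsto (fun r : ℝ => volume (E ∩ Metric.ball x r) / volume (Metric.ball x r))
    (nhdsWithin 0 (Ioi 0)) (nhds 1)}

/-- `E` is a minimizer of problem (10): the constrained isoperimetric problem
minimizing `P_φ` among measurable subsets of `Ω` of prescribed measure `m`. -/
def IsIsopMinimizer {n : ℕ} (φ : (Fin n → ℝ) → ℝ) (Ω : Set (Fin n → ℝ)) (m : ℝ)
    (E : Set (Fin n → ℝ)) : Prop :=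
  MeasurableSet E ∧ E ⊆ Ω ∧ (volume E).toReal = m ∧
    ∀ F, MeasurableSet F → F ⊆ Ω → (volume F).toReal = m →
      anisoPerimeter φ E ≤ anisoPerimeter φ F

/-- The Euclidean norm on `ℝ²`. -/
def euclNorm (v : Fin 2 → ℝ) : ℝ := Real.sqrt (v 0 ^ 2 + v 1 ^ 2)

/-- The crystalline norm `φ(ν) = |ν₁| + |ν₂|` on `ℝ²`. -/
def crysNorm (v : Fin 2 → ℝ) : ℝ := |v 0| + |v 1|

/-- The open unit square `(0,1)² ⊆ ℝ²`. -/
def unitSquare : Set (Fin 2 → ℝ) := univ.pi fun _ => Ioo (0 : ℝ) 1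

/-- The closed unit square `[0,1]² ⊆ ℝ²`. -/
def closedUnitSquare : Set (Fin 2 → ℝ) := univ.pi fun _ => Icc (0 : ℝ) 1

/-- `j` is the essential supremum `‖u‖_∞` of `u`. -/
def IsEssSup (u : (Fin 2 → ℝ) → ℝ) (j : ℕ) : Prop :=
  (∀ᵐ x ∂volume, u x ≤ (j : ℝ)) ∧ ∀ c : ℝ, (∀ᵐ x ∂volume, u x ≤ c) → (j : ℝ) ≤ c


section AuxStatement4

variable {φ : (Fin 2 → ℝ) → ℝ}

lemma IsNorm.zero (hφ : IsNorm φ) : φ 0 = 0 := (hφ.eq_zero_iff 0).mpr rfl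

lemma IsNorm.smul_nn (hφ : IsNorm φ) {t : ℝ} (ht : 0 ≤ t) (v : Fin 2 → ℝ) :
    φ (t • v) = t * φ v := by rw [hφ.smul_eq, abs_of_nonneg ht]

lemma IsNorm.neg' (hφ : IsNorm φ) (v : Fin 2 → ℝ) : φ (-v) = φ v := by
  have := hφ.smul_eq (-1) v
  simpa using this

lemma IsNorm.le_norm (hφ : IsNorm φ) (v : Fin 2 → ℝ) :
    φ v ≤ (φ (Pi.single 0 1) + φ (Pi.single 1 1)) * ‖v‖ := by
  set e0 : Fin 2 → ℝ := Pi.single 0 1 with he0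
  set e1 : Fin 2 → ℝ := Pi.single 1 1 with he1
  have hv : v = v 0 • e0 + v 1 • e1 := by
    funext i; fin_cases i <;> simp [he0, he1]
  have h0 : |v 0| ≤ ‖v‖ := by simpa [Real.norm_eq_abs] using norm_le_pi_norm v 0
  have h1 : |v 1| ≤ ‖v‖ := by simpa [Real.norm_eq_abs] using norm_le_pi_norm v 1
  have n0 := hφ.nonneg e0
  have n1 := hφ.nonneg e1
  have step : φ v ≤ |v 0| * φ e0 + |v 1| * φ e1 := by
    conv_lhs => rw [hv]
    calc φ (v 0 • e0 + v 1 • e1)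
        ≤ φ (v 0 • e0) + φ (v 1 • e1) := hφ.add_le _ _
      _ = |v 0| * φ e0 + |v 1| * φ e1 := by rw [hφ.smul_eq, hφ.smul_eq]
  nlinarith [abs_nonneg (v 0), abs_nonneg (v 1)]

lemma IsNorm.continuous (hφ : IsNorm φ) : Continuous φ := by
  set C := φ (Pi.single 0 1) + φ (Pi.single 1 1) with hCdef
  have hC0 : 0 ≤ C := add_nonneg (hφ.nonneg _) (hφ.nonneg _)
  have key : ∀ a b : Fin 2 → ℝ, φ a - φ b ≤ C * dist a b := by
    intro a b
    have h1 : φ a ≤ φ (a - b) + φ b := by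
      have := hφ.add_le (a - b) b; simpa using this
    have h2 : φ (a - b) ≤ C * ‖a - b‖ := hφ.le_norm _
    rw [dist_eq_norm]; linarith
  rw [Metric.continuous_iff]
  intro b ε hε
  refine ⟨ε / (C + 1), by positivity, fun a ha => ?_⟩
  have h1 := key a b
  have h2 := key b a
  rw [dist_comm b a] at h2
  have habs : |φ a - φ b| ≤ C * dist a b := abs_sub_le_iff.mpr ⟨h1, by linarith⟩
  have hd : 0 ≤ dist a b := dist_nonneg
  have h4 : C * (ε / (C + 1)) < ε := by
    have hlt : C / (C + 1) < 1 := by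
      rw [div_lt_one (by linarith)]; linarith
    calc C * (ε / (C + 1)) = (C / (C + 1)) * ε := by ring
      _ < 1 * ε := by nlinarith
      _ = ε := one_mul ε
  calc dist (φ a) (φ b) = |φ a - φ b| := Real.dist_eq _ _
    _ ≤ C * dist a b := habs
    _ ≤ C * (ε / (C + 1)) := by nlinarith
    _ < ε := h4

lemma IsNorm.isOpen_ball (hφ : IsNorm φ) (c : Fin 2 → ℝ) (r : ℝ) :
    IsOpen (wulffBall φ c r) := by
  have : wulffBall φ c r = (fun y => φ (y - c)) ⁻¹' Iio r := rfl
  rw [this]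
  exact (isOpen_Iio).preimage (hφ.continuous.comp (continuous_id.sub continuous_const))

lemma IsNorm.frontier_ball (hφ : IsNorm φ) {c z : Fin 2 → ℝ} {r : ℝ}
    (hz : z ∈ frontier (wulffBall φ c r)) : φ (z - c) = r := by
  have hcl : closure (wulffBall φ c r) ⊆ (fun y => φ (y - c)) ⁻¹' Iic r := by
    refine closure_minimal ?_ ?_
    · intro y hy
      exact le_of_lt (show φ (y - c) < r from hy)
    · exact (isClosed_Iic).preimage (hφ.continuous.comp (continuous_id.sub continuous_const))
  rw [(hφ.isOpen_ball c r).frontier_eq] at hz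
  exact le_antisymm (hcl hz.1) (not_lt.mp hz.2)

/-- Moving from `y ∈ E` along direction `u`, under a boundedness assumption,
one hits the frontier of the open convex set `E`. -/
lemma ray_to_frontier (E : Set (Fin 2 → ℝ)) (hEconv : Convex ℝ E) (hEopen : IsOpen E)
    {y u : Fin 2 → ℝ} (hy : y ∈ E) (hu : u ≠ 0) {C : ℝ}
    (hbdd : ∀ t : ℝ, 0 ≤ t → y + t • u ∈ E → t ≤ C) :
    ∃ τ : ℝ, 0 ≤ τ ∧ τ ≤ C ∧ y + τ • u ∈ frontier E := by
  set T : Set ℝ := {t | 0 ≤ t ∧ y + t • u ∈ E} with hTdef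
  have h0T : (0:ℝ) ∈ T := ⟨le_refl 0, by simpa using hy⟩
  have hTne : T.Nonempty := ⟨0, h0T⟩
  have hTbdd : BddAbove T := ⟨C, fun t ht => hbdd t ht.1 ht.2⟩
  have hnu : 0 < ‖u‖ := norm_pos_iff.mpr hu
  set τ := sSup T with hτdef
  have hτ0 : 0 ≤ τ := le_csSup hTbdd h0T
  have hτC : τ ≤ C := csSup_le hTne fun t ht => hbdd t ht.1 ht.2
  have hτpos : 0 < τ := by
    obtain ⟨ε, hε, hball⟩ := Metric.isOpen_iff.mp hEopen y hy
    set t0 : ℝ := ε / (2 * ‖u‖) with ht0def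
    have ht0 : 0 < t0 := by positivity
    have ht0T : t0 ∈ T := by
      refine ⟨ht0.le, hball ?_⟩
      rw [Metric.mem_ball, dist_eq_norm]
      have heq : y + t0 • u - y = t0 • u := by abel
      rw [heq, norm_smul, Real.norm_eq_abs, abs_of_pos ht0]
      rw [ht0def]
      rw [div_mul_eq_mul_div, div_lt_iff₀ (by positivity)]
      nlinarith
    exact lt_of_lt_of_le ht0 (le_csSup hTbdd ht0T)
  refine ⟨τ, hτ0, hτC, ?_⟩
  rw [hEopen.frontier_eq]
  constructor
  · -- in the closure
    have htend : Tendsto (fun t : ℝ => y + t • u) (nhdsWithin τ (Iio τ)) (nhds (y + τ • u)) :=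
      ((continuous_const.add (continuous_id.smul continuous_const)).tendsto τ).mono_left
        nhdsWithin_le_nhds
    refine mem_closure_of_tendsto htend ?_
    filter_upwards [Ioo_mem_nhdsLT_of_mem (⟨hτpos, le_refl τ⟩ : τ ∈ Ioc (0:ℝ) τ)] with t ht
    obtain ⟨ht0, htτ⟩ := ht
    obtain ⟨s, hsT, hts⟩ := exists_lt_of_lt_csSup hTne htτ
    have hs0 : 0 < s := lt_trans ht0 hts
    have hcomb : y + t • u = (1 - t/s) • y + (t/s) • (y + s • u) := by
      rw [smul_add, smul_smul, div_mul_cancel₀ t hs0.ne', sub_smul, one_smul]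
      abel
    rw [hcomb]
    exact hEconv hy hsT.2 (by nlinarith [div_nonneg ht0.le hs0.le, (div_le_one hs0).mpr hts.le])
      (div_nonneg ht0.le hs0.le) (by ring)
  · -- not in E
    intro hzE
    obtain ⟨ε, hε, hball⟩ := Metric.isOpen_iff.mp hEopen _ hzE
    set δ : ℝ := ε / (2 * ‖u‖) with hδdef
    have hδ0 : 0 < δ := by positivity
    have hmem : τ + δ ∈ T := by
      refine ⟨by linarith, hball ?_⟩
      rw [Metric.mem_ball, dist_eq_norm]
      have heq : y + (τ + δ) • u - (y + τ • u) = δ • u := by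
        rw [add_smul]; abel
      rw [heq, norm_smul, Real.norm_eq_abs, abs_of_pos hδ0]
      rw [hδdef, div_mul_eq_mul_div, div_lt_iff₀ (by positivity)]
      nlinarith
    have := le_csSup hTbdd hmem
    linarith

end AuxStatement4

/-- A convex open set `E ⊆ ℝ²` satisfying the `rW_φ`-condition for
some `r > 0` coincides with its Wulff plaquette `E^r`. -/
theorem convex_open_eq_plaquette (φ : (Fin 2 → ℝ) → ℝ) (hφ : IsNorm φ)
    (E : Set (Fin 2 → ℝ)) (hEconv : Convex ℝ E) (hEopen : IsOpen E)
    (r : ℝ) (hr : 0 < r) (hcond : rWCond φ E r) :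
    E = plaquette φ E r := by
  have hrne : r ≠ 0 := ne_of_gt hr
  apply Subset.antisymm
  · -- E ⊆ plaquette
    intro x hx
    rw [plaquette, if_neg hrne]
    simp only [mem_iUnion]
    by_contra Hc
    push_neg at Hc
    by_cases hfr : frontier E = ∅
    · -- E is all of ℝ²
      have hEclosed : IsClosed E := by
        rw [← closure_subset_iff_isClosed]
        intro z hz
        by_contra hzE
        have : z ∈ frontier E := by rw [hEopen.frontier_eq]; exact ⟨hz, hzE⟩
        rw [hfr] at this; exact this
      have hEuniv : E = univ := IsClopen.eq_univ (s := E) ⟨hEclosed, hEopen⟩ ⟨x, hx⟩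
      refine Hc x (by rw [hEuniv]; exact subset_univ _) ?_
      show φ (x - x) < r
      rw [sub_self, hφ.zero]; exact hr
    obtain ⟨z₀, hz₀⟩ := nonempty_iff_ne_empty.mpr hfr
    obtain ⟨w₀, hw₀E, _⟩ := hcond z₀ hz₀
    -- the Minkowski sum T = S + rW
    set T : Set (Fin 2 → ℝ) := {p | ∃ w, wulffBall φ w r ⊆ E ∧ φ (p - w) < r} with hTdef
    have hTopen : IsOpen T := by
      have hTeq : T = ⋃ (w) (_ : wulffBall φ w r ⊆ E), wulffBall φ w r := by
        ext p
        simp only [hTdef, mem_setOf_eq, mem_iUnion, wulffBall, exists_prop]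
      rw [hTeq]
      exact isOpen_iUnion fun w => isOpen_iUnion fun _ => hφ.isOpen_ball w r
    have hTconv : Convex ℝ T := by
      rintro p₁ ⟨w₁, hw₁, hp₁⟩ p₂ ⟨w₂, hw₂, hp₂⟩ a b ha hb hab
      refine ⟨a • w₁ + b • w₂, ?_, ?_⟩
      · intro q hq
        have hq' : φ (q - (a • w₁ + b • w₂)) < r := hq
        have hkey : q = a • (q - (a • w₁ + b • w₂) + w₁) + b • (q - (a • w₁ + b • w₂) + w₂) := by
          rw [smul_add, smul_add, ← add_assoc, add_assoc (a • (q - (a • w₁ + b • w₂)))]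
          rw [add_comm (a • w₁) (b • (q - (a • w₁ + b • w₂)))]
          rw [← add_assoc, ← add_smul, hab, one_smul]
          abel
        rw [hkey]
        refine hEconv (hw₁ ?_) (hw₂ ?_) ha hb hab
        · show φ (q - (a • w₁ + b • w₂) + w₁ - w₁) < r
          simpa using hq'
        · show φ (q - (a • w₁ + b • w₂) + w₂ - w₂) < r
          simpa using hq'
      · show φ (a • p₁ + b • p₂ - (a • w₁ + b • w₂)) < r
        have heq : a • p₁ + b • p₂ - (a • w₁ + b • w₂) = a • (p₁ - w₁) + b • (p₂ - w₂) := by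
          rw [smul_sub, smul_sub]; abel
        rw [heq]
        calc φ (a • (p₁ - w₁) + b • (p₂ - w₂))
            ≤ φ (a • (p₁ - w₁)) + φ (b • (p₂ - w₂)) := hφ.add_le _ _
          _ = a * φ (p₁ - w₁) + b * φ (p₂ - w₂) := by
              rw [hφ.smul_nn ha, hφ.smul_nn hb]
          _ < r := by
              have := (convex_Iio r) hp₁ hp₂ ha hb hab
              simpa [smul_eq_mul] using this
    have hxT : x ∉ T := by
      rintro ⟨w, hw, hxw⟩
      exact Hc w hw hxw
    obtain ⟨ℓ, hℓ⟩ := geometric_hahn_banach_open_point hTconv hTopen hxT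
    have hw₀T : w₀ ∈ T := ⟨w₀, hw₀E, by rw [sub_self, hφ.zero]; exact hr⟩
    have hℓw₀ : ℓ w₀ < ℓ x := hℓ _ hw₀T
    set u : Fin 2 → ℝ := x - w₀ with hudef
    have hℓu : 0 < ℓ u := by rw [hudef, map_sub]; linarith
    have hune : u ≠ 0 := by
      intro h; rw [h, map_zero] at hℓu; exact lt_irrefl 0 hℓu
    -- key estimate from the separation
    have key : ∀ w, wulffBall φ w r ⊆ E → ∀ v, φ v ≤ 1 → ℓ w + ℓ v * r ≤ ℓ x := by
      intro w hw v hv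
      have hstep : ∀ t ∈ Ioo (0:ℝ) r, ℓ w + ℓ v * t ≤ ℓ x := by
        intro t ht
        have hmem : w + t • v ∈ T := by
          refine ⟨w, hw, ?_⟩
          have heq : w + t • v - w = t • v := by abel
          rw [heq, hφ.smul_nn ht.1.le]
          calc t * φ v ≤ t * 1 := mul_le_mul_of_nonneg_left hv ht.1.le
            _ < r := by simpa using ht.2
        have := hℓ _ hmem
        rw [map_add, ℓ.map_smul, smul_eq_mul] at this
        linarith [this]
      have htend : Tendsto (fun t : ℝ => ℓ w + ℓ v * t) (nhdsWithin r (Iio r))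
          (nhds (ℓ w + ℓ v * r)) :=
        ((continuous_const.add (continuous_const.mul continuous_id)).tendsto r).mono_left
          nhdsWithin_le_nhds
      refine le_of_tendsto htend ?_
      filter_upwards [Ioo_mem_nhdsLT_of_mem (⟨hr, le_refl r⟩ : r ∈ Ioc (0:ℝ) r)] with t ht
      exact hstep t ht
    -- the dual quantity ψ
    set D : Set ℝ := ℓ '' {v | φ v ≤ 1} with hDdef
    have h0D : (0:ℝ) ∈ D := ⟨0, by simp [hφ.zero], map_zero ℓ⟩
    have hDne : D.Nonempty := ⟨0, h0D⟩
    have hDbdd : BddAbove D := by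
      refine ⟨(ℓ x - ℓ w₀) / r, ?_⟩
      rintro a ⟨v, hv, rfl⟩
      rw [le_div_iff₀ hr]
      have := key w₀ hw₀E v hv
      linarith
    set ψ : ℝ := sSup D with hψdef
    have hψ0 : 0 ≤ ψ := le_csSup hDbdd h0D
    have hψφ : ∀ v, ℓ v ≤ ψ * φ v := by
      intro v
      rcases eq_or_ne v 0 with h | h
      · rw [h, map_zero, hφ.zero, mul_zero]
      · have hv : 0 < φ v :=
          lt_of_le_of_ne (hφ.nonneg v) fun hh => h ((hφ.eq_zero_iff v).mp hh.symm)
        have h1 : φ ((φ v)⁻¹ • v) ≤ 1 := by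
          rw [hφ.smul_nn (inv_nonneg.mpr hv.le), inv_mul_cancel₀ hv.ne']
        have h2 : ℓ ((φ v)⁻¹ • v) ≤ ψ := le_csSup hDbdd ⟨_, h1, rfl⟩
        rw [ℓ.map_smul, smul_eq_mul] at h2
        calc ℓ v = φ v * ((φ v)⁻¹ * ℓ v) := by field_simp
          _ ≤ φ v * ψ := mul_le_mul_of_nonneg_left h2 hv.le
          _ = ψ * φ v := mul_comm _ _
    have hsep : ∀ w, wulffBall φ w r ⊆ E → ℓ w + ψ * r ≤ ℓ x := by
      intro w hw
      have h1 : ψ ≤ (ℓ x - ℓ w) / r := by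
        refine csSup_le hDne ?_
        rintro a ⟨v, hv, rfl⟩
        rw [le_div_iff₀ hr]
        have := key w hw v hv
        linarith
      rw [le_div_iff₀ hr] at h1
      linarith
    -- every point of E has bounded ℓ-value
    have star : ∀ y ∈ E, ℓ y ≤ ℓ x + ψ * r := by
      intro y hy
      by_cases hby : wulffBall φ y r ⊆ E
      · have := hsep y hby
        have := mul_nonneg hψ0 hr.le
        linarith
      · obtain ⟨y', hy'ball, hy'E⟩ := not_subset.mp hby
        have huy : y' - y ≠ 0 := sub_ne_zero.mpr fun h => hy'E (h ▸ hy)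
        have hbdd1 : ∀ t : ℝ, 0 ≤ t → y + t • (y' - y) ∈ E → t ≤ 1 := by
          intro t ht hmem
          by_contra hlt
          push_neg at hlt
          have htpos : 0 < t := lt_trans one_pos hlt
          apply hy'E
          have hcomb : y' = (1 - 1/t) • y + (1/t) • (y + t • (y' - y)) := by
            rw [smul_add, smul_smul, one_div, inv_mul_cancel₀ htpos.ne', one_smul,
              sub_smul, one_smul]
            abel
          rw [hcomb]
          refine hEconv hy hmem ?_ (by positivity) (by ring)
          have : 1/t ≤ 1 := by rw [div_le_one htpos]; linarith
          linarith
        obtain ⟨τ, hτ0, hτ1, hzfr⟩ := ray_to_frontier E hEconv hEopen hy huy hbdd1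
        have hφzy : φ (y + τ • (y' - y) - y) < r := by
          have heq : y + τ • (y' - y) - y = τ • (y' - y) := by abel
          rw [heq, hφ.smul_nn hτ0]
          have h1 : φ (y' - y) < r := hy'ball
          nlinarith [hφ.nonneg (y' - y)]
        obtain ⟨w, hwE, hzw⟩ := hcond _ hzfr
        have hzwr : φ (y + τ • (y' - y) - w) = r := hφ.frontier_ball hzw
        have e1 : ℓ (y - (y + τ • (y' - y))) ≤ ψ * φ (y - (y + τ • (y' - y))) := hψφ _
        have e2 : ℓ (y + τ • (y' - y) - w) ≤ ψ * r := by
          have := hψφ (y + τ • (y' - y) - w)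
          rwa [hzwr] at this
        have hφneg : φ (y - (y + τ • (y' - y))) = φ (y + τ • (y' - y) - y) := by
          rw [show y - (y + τ • (y' - y)) = -(y + τ • (y' - y) - y) from by abel, hφ.neg']
        have hsplit : ℓ (y - (y + τ • (y' - y))) + ℓ (y + τ • (y' - y) - w) = ℓ y - ℓ w := by
          rw [← map_add, show y - (y + τ • (y' - y)) + (y + τ • (y' - y) - w) = y - w from by
            abel, map_sub]
        have hsw := hsep w hwE
        have e3 : ψ * φ (y - (y + τ • (y' - y))) ≤ ψ * r := by
          rw [hφneg]
          exact mul_le_mul_of_nonneg_left hφzy.le hψ0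
        linarith
    -- final contradiction: move from x a bit in direction u, then ray to the frontier
    obtain ⟨ε, hε, hball⟩ := Metric.isOpen_iff.mp hEopen x hx
    have hnu : 0 < ‖u‖ := norm_pos_iff.mpr hune
    set δ : ℝ := ε / (2 * ‖u‖) with hδdef
    have hδ0 : 0 < δ := by positivity
    set y : Fin 2 → ℝ := x + δ • u with hydef
    have hyE : y ∈ E := by
      refine hball ?_
      rw [Metric.mem_ball, dist_eq_norm]
      have heq : y - x = δ • u := by rw [hydef]; abel
      rw [heq, norm_smul, Real.norm_eq_abs, abs_of_pos hδ0]
      rw [hδdef, div_mul_eq_mul_div, div_lt_iff₀ (by positivity)]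
      nlinarith
    have hℓy : ℓ y = ℓ x + δ * ℓ u := by
      rw [hydef, map_add, ℓ.map_smul, smul_eq_mul]
    have hbdd2 : ∀ t : ℝ, 0 ≤ t → y + t • u ∈ E → t ≤ (ℓ x + ψ * r - ℓ y) / ℓ u := by
      intro t ht hmem
      have := star _ hmem
      rw [map_add, ℓ.map_smul, smul_eq_mul] at this
      rw [le_div_iff₀ hℓu]
      linarith
    obtain ⟨τ, hτ0, _, hzfr⟩ := ray_to_frontier E hEconv hEopen hyE hune hbdd2
    obtain ⟨w, hwE, hzw⟩ := hcond _ hzfr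
    have hzwr : φ (y + τ • u - w) = r := hφ.frontier_ball hzw
    have e2 : ℓ (y + τ • u - w) ≤ ψ * r := by
      have := hψφ (y + τ • u - w)
      rwa [hzwr] at this
    have hexp : ℓ (y + τ • u - w) = ℓ y + τ * ℓ u - ℓ w := by
      rw [map_sub, map_add, ℓ.map_smul, smul_eq_mul]
    have hsw := hsep w hwE
    nlinarith [mul_nonneg hτ0 hℓu.le, mul_pos hδ0 hℓu]
  · -- plaquette ⊆ E
    rw [plaquette, if_neg hrne]
    intro p hp
    simp only [mem_iUnion] at hp
    obtain ⟨w, hw, hpw⟩ := hp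
    exact hw hpw


end
end

section
/- Convexity is essential in the statement that a set satisfying the rW-condition equals its Wulff plaquette: let A, B, C ∈ ℝ² be the vertices of an equilateral triangle with side length 1, and (with the Euclidean norm on ℝ²) let E = B_{1/2}(A) ∪ B_{1/2}(B) ∪ B_{1/2}(C) ∪ T, where B_{1/2}(·) denotes open Euclidean balls of radius 1/2 and T is the (closed) triangle with vertices A, B, C. Then E satisfies the (1/2)W-condition with respect to the Euclidean norm, but E^{1/2} = B_{1/2}(A) ∪ B_{1/2}(B) ∪ B_{1/2}(C) ≠ E. -/
open MeasureTheory Set ENNReal Filter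

noncomputable section

namespace PCEX

def nsq (v : Fin 2 → ℝ) : ℝ := v 0 ^ 2 + v 1 ^ 2

def ip (a b : Fin 2 → ℝ) : ℝ := a 0 * b 0 + a 1 * b 1

lemma nsq_nonneg (v : Fin 2 → ℝ) : 0 ≤ nsq v := by unfold nsq; positivity

lemma euclNorm_lt_iff {v : Fin 2 → ℝ} {r : ℝ} (hr : 0 < r) :
    euclNorm v < r ↔ nsq v < r ^ 2 := Real.sqrt_lt' hr

lemma euclNorm_eq_iff {v : Fin 2 → ℝ} {r : ℝ} (hr : 0 ≤ r) :
    euclNorm v = r ↔ nsq v = r ^ 2 := by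
  constructor
  · intro h
    have := congrArg (· ^ 2) h
    rw [show euclNorm v = Real.sqrt (nsq v) from rfl] at this
    simpa [Real.sq_sqrt (nsq_nonneg v)] using this
  · intro h
    rw [show euclNorm v = Real.sqrt (nsq v) from rfl, h]
    exact Real.sqrt_eq_iff_eq_sq (by positivity) hr |>.mpr rfl

def eE : (Fin 2 → ℝ) ≃L[ℝ] EuclideanSpace ℝ (Fin 2) := (EuclideanSpace.equiv (Fin 2) ℝ).symm

lemma norm_eE (v : Fin 2 → ℝ) : ‖eE v‖ = euclNorm v := by
  rw [EuclideanSpace.norm_eq]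
  simp [eE, Fin.sum_univ_two, euclNorm, Real.norm_eq_abs, sq_abs]

lemma wulff_preimage (V : Fin 2 → ℝ) (r : ℝ) :
    wulffBall euclNorm V r = eE ⁻¹' Metric.ball (eE V) r := by
  ext y
  simp [wulffBall, Metric.mem_ball, dist_eq_norm, ← map_sub, norm_eE]

lemma isOpen_wulff (V : Fin 2 → ℝ) (r : ℝ) : IsOpen (wulffBall euclNorm V r) := by
  rw [wulff_preimage]; exact Metric.isOpen_ball.preimage eE.continuous

lemma frontier_wulff (V : Fin 2 → ℝ) {r : ℝ} (hr : r ≠ 0) :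
    frontier (wulffBall euclNorm V r) = {y | euclNorm (y - V) = r} := by
  rw [wulff_preimage, show (⇑eE : (Fin 2 → ℝ) → _) = ⇑eE.toHomeomorph from rfl,
    ← eE.toHomeomorph.preimage_frontier, frontier_ball _ hr]
  ext y
  simp [Metric.mem_sphere, dist_eq_norm, ← map_sub, norm_eE]

lemma closure_wulff (V : Fin 2 → ℝ) {r : ℝ} (hr : r ≠ 0) :
    closure (wulffBall euclNorm V r) = {y | euclNorm (y - V) ≤ r} := by
  rw [wulff_preimage, show (⇑eE : (Fin 2 → ℝ) → _) = ⇑eE.toHomeomorph from rfl,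
    ← eE.toHomeomorph.preimage_closure, closure_ball _ hr]
  ext y
  simp [Metric.mem_closedBall, dist_eq_norm, ← map_sub, norm_eE]

lemma mem_hull_iff (A B C x : Fin 2 → ℝ) :
    x ∈ convexHull ℝ ({A, B, C} : Set (Fin 2 → ℝ)) ↔
      ∃ a b c : ℝ, 0 ≤ a ∧ 0 ≤ b ∧ 0 ≤ c ∧ a + b + c = 1 ∧
        ∀ i, x i = a * A i + b * B i + c * C i := by
  constructor
  · intro hx
    rw [convexHull_insert ⟨B, by simp⟩, mem_convexJoin] at hx
    obtain ⟨a0, ha0, z, hz, hxz⟩ := hx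
    rw [mem_singleton_iff] at ha0
    subst ha0
    rw [convexHull_pair] at hz
    obtain ⟨b', c', hb', hc', hbc', hz⟩ := hz
    obtain ⟨a, q, ha, hq, haq, hx⟩ := hxz
    refine ⟨a, q * b', q * c', ha, by positivity, by positivity, by nlinarith, ?_⟩
    intro i
    have := congrFun hx i
    have hzi := congrFun hz i
    simp only [Pi.add_apply, Pi.smul_apply, smul_eq_mul] at this hzi
    rw [← this, ← hzi]
    ring
  · rintro ⟨a, b, c, ha, hb, hc, habc, hx⟩
    have hmem : (fun i => a * A i + b * B i + c * C i) ∈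
        convexHull ℝ ({A, B, C} : Set (Fin 2 → ℝ)) := by
      have := (convex_convexHull ℝ ({A, B, C} : Set (Fin 2 → ℝ))).sum_mem
        (t := (Finset.univ : Finset (Fin 3))) (w := ![a, b, c]) (z := ![A, B, C])
        (by intro i _; fin_cases i <;> simpa) (by simp [Fin.sum_univ_three, habc])
        (by intro i _; apply subset_convexHull ℝ; fin_cases i <;> simp)
      convert this using 1
      ext i
      simp [Fin.sum_univ_three]
    have : x = fun i => a * A i + b * B i + c * C i := funext hx
    rw [this]; exact hmem

lemma bad_point_neg {s t : ℝ} (ht : t < 0) (hQpos : 0 < s^2+s*t+t^2)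
    (hQlt : s^2+s*t+t^2 < 3/4) :
    ∃ a b : ℝ, b < 0 ∧ a^2 + a*b + b^2 = 1/4 ∧
      (a-s)^2 + (a-s)*(b-t) + (b-t)^2 < 1/4 := by
  have hr2 : (Real.sqrt (s^2+s*t+t^2))^2 = s^2+s*t+t^2 := Real.sq_sqrt hQpos.le
  set r := Real.sqrt (s^2+s*t+t^2) with hr
  have hrpos : 0 < r := Real.sqrt_pos.mpr hQpos
  have hr1 : r < 1 := by nlinarith
  have hrne : r ≠ 0 := hrpos.ne'
  refine ⟨s/(2*r), t/(2*r), div_neg_of_neg_of_pos ht (by positivity), ?_, ?_⟩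
  · field_simp
    linear_combination (-4) * hr2
  · have heq : (s/(2*r)-s)^2 + (s/(2*r)-s)*(t/(2*r)-t) + (t/(2*r)-t)^2
        = (1-2*r)^2/4 := by
      field_simp
      linear_combination (-4*(1-2*r)^2)*hr2
    rw [heq]
    nlinarith

lemma bad_point_pos {s t : ℝ} (ht : 0 ≤ t) (hts : t ≤ s)
    (hQpos : 0 < s^2+s*t+t^2) (hQlt : s^2+s*t+t^2 < 3/4) :
    ∃ a b : ℝ, b < 0 ∧ a^2 + a*b + b^2 = 1/4 ∧
      (a-s)^2 + (a-s)*(b-t) + (b-t)^2 < 1/4 := by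
  have hs : 0 < s := by nlinarith
  have hst : 0 < s + 2*t := by linarith
  have hg : 0 < s + t/2 - (s^2+s*t+t^2) := by
    nlinarith [mul_nonneg (sub_nonneg.2 hts) hst.le,
      mul_pos hQpos (show (0:ℝ) < 3-4*(s^2+s*t+t^2) by linarith)]
  set QQ := s^2+s*t+t^2 with hQQ
  set g := s + t/2 - QQ with hgdef
  set ε := min 1 (g/(s+2*t)) with hεdef
  have hε0 : 0 < ε := lt_min one_pos (div_pos hg hst)
  have hε1 : ε ≤ 1 := min_le_left _ _
  have hεg : ε * (s+2*t) ≤ g := by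
    have h := min_le_right 1 (g/(s+2*t))
    calc ε * (s+2*t) ≤ g/(s+2*t) * (s+2*t) := by
          exact mul_le_mul_of_nonneg_right h hst.le
      _ = g := by field_simp
  have hargpos : (0:ℝ) < 1 - ε + ε^2 := by nlinarith [sq_nonneg (ε - 1/2)]
  have hL2 : (Real.sqrt (1 - ε + ε^2))^2 = 1 - ε + ε^2 := Real.sq_sqrt hargpos.le
  set L := Real.sqrt (1 - ε + ε^2) with hLdef
  have hLpos : 0 < L := Real.sqrt_pos.mpr hargpos
  have hLne : L ≠ 0 := hLpos.ne'
  have hL1 : L ≤ 1 := by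
    nlinarith [sq_nonneg (L-1), mul_nonneg hε0.le (sub_nonneg.2 hε1)]
  refine ⟨1/(2*L), -(ε/(2*L)), by
    have : 0 < ε/(2*L) := by positivity
    linarith, ?_, ?_⟩
  · field_simp
    linear_combination (-4 : ℝ) * hL2
  · have key : (2*s+t-ε*(s+2*t))/(2*L) > QQ := by
      rw [gt_iff_lt, lt_div_iff₀ (by positivity)]
      have h2 : QQ*(2*L) ≤ 2*QQ := by
        nlinarith [mul_le_mul_of_nonneg_left hL1 (show (0:ℝ) ≤ 2*QQ by positivity)]
      have h3 : 2*s + t - ε*(s+2*t) ≥ s + t/2 + QQ := by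
        have h5 := hεg
        rw [hgdef] at h5
        linarith
      have h4 : s + t/2 + QQ > 2*QQ := by
        have h6 := hg
        rw [hgdef] at h6
        linarith
      calc QQ * (2*L) ≤ 2*QQ := h2
        _ < s + t/2 + QQ := h4
        _ ≤ 2*s + t - ε*(s+2*t) := h3
    have heq : (1/(2*L)-s)^2 + (1/(2*L)-s)*(-(ε/(2*L))-t) + (-(ε/(2*L))-t)^2
        = 1/4 + QQ - (2*s+t-ε*(s+2*t))/(2*L) := by
      rw [hQQ]
      field_simp
      linear_combination (-4 : ℝ) * hL2
    rw [heq]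
    linarith


lemma far_lemma (w z : Fin 2 → ℝ) (hw : nsq w = 1/4) (hz : nsq z = 1) :
    1/4 ≤ nsq (w - z) := by
  unfold nsq at *
  simp only [Pi.sub_apply]
  nlinarith [sq_nonneg (w 0 * z 1 - w 1 * z 0), sq_nonneg (w 0 * z 0 + w 1 * z 1 + 1/2)]


lemma nsq_combo (u v : Fin 2 → ℝ) (hu : nsq u = 1) (hv : nsq v = 1)
    (hip : ip u v = 1/2) (α β : ℝ) :
    nsq (fun i => α * u i + β * v i) = α^2 + α*β + β^2 := by
  unfold nsq ip at *
  simp only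
  linear_combination α^2 * hu + β^2 * hv + 2*α*β*hip


lemma coeff_unique {u v : Fin 2 → ℝ} (hδ : u 0 * v 1 - u 1 * v 0 ≠ 0)
    {α β α' β' : ℝ} (h0 : α * u 0 + β * v 0 = α' * u 0 + β' * v 0)
    (h1 : α * u 1 + β * v 1 = α' * u 1 + β' * v 1) : α = α' ∧ β = β' := by
  constructor
  · have : (α - α') * (u 0 * v 1 - u 1 * v 0) = 0 := by linear_combination v 1 * h0 - v 0 * h1
    rcases mul_eq_zero.1 this with h | h
    · linarith
    · exact absurd h hδ
  · have : (β - β') * (u 0 * v 1 - u 1 * v 0) = 0 := by linear_combination u 0 * h1 - u 1 * h0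
    rcases mul_eq_zero.1 this with h | h
    · linarith
    · exact absurd h hδ


lemma vertex_contra (A x u' v' : Fin 2 → ℝ) (hu' : nsq u' = 1) (hv' : nsq v' = 1)
    (hip' : ip u' v' = 1/2) (hδ' : u' 0 * v' 1 - u' 1 * v' 0 ≠ 0)
    (s t a b : ℝ) (hdx : ∀ i, x i - A i = s * u' i + t * v' i)
    (hb : b < 0) (hab : a^2+a*b+b^2 = 1/4)
    (hfar : (a-s)^2+(a-s)*(b-t)+(b-t)^2 < 1/4) :
    ∃ p : Fin 2 → ℝ, nsq (p - x) < 1/4 ∧ nsq (p - A) = 1/4 ∧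
      (∀ β γ : ℝ, 0 ≤ γ → (∀ i, p i - A i = β * u' i + γ * v' i) → False) := by
  refine ⟨fun i => A i + a * u' i + b * v' i, ?_, ?_, ?_⟩
  · have h2 : (fun i => A i + a * u' i + b * v' i) - x
        = fun i => (a-s) * u' i + (b-t) * v' i := by
      funext i
      simp only [Pi.sub_apply]
      linear_combination -(hdx i)
    rw [h2, nsq_combo _ _ hu' hv' hip']
    exact hfar
  · have h1 : (fun i => A i + a * u' i + b * v' i) - A
        = fun i => a * u' i + b * v' i := by
      funext i
      simp only [Pi.sub_apply]
      ring
    rw [h1, nsq_combo _ _ hu' hv' hip']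
    exact hab
  · intro β γ hγ hrep
    have e0 : a * u' 0 + b * v' 0 = β * u' 0 + γ * v' 0 := by
      have := hrep 0
      simp only at this
      linarith
    have e1 : a * u' 1 + b * v' 1 = β * u' 1 + γ * v' 1 := by
      have := hrep 1
      simp only at this
      linarith
    obtain ⟨-, hbγ⟩ := coeff_unique hδ' e0 e1
    linarith


lemma key_vertex (A B C x : Fin 2 → ℝ)
    (hu : nsq (B - A) = 1) (hv : nsq (C - A) = 1) (hbc : nsq (B - C) = 1)
    (hsub : ∀ p : Fin 2 → ℝ, nsq (p - x) < 1/4 →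
      nsq (p - A) < 1/4 ∨ nsq (p - B) < 1/4 ∨ nsq (p - C) < 1/4 ∨
        p ∈ convexHull ℝ ({A, B, C} : Set (Fin 2 → ℝ)))
    (hxA : nsq (x - A) < 3/4) : x = A := by
  by_contra hne
  have hip : ip (B - A) (C - A) = 1/2 := by
    have h : nsq (B - C) = nsq (B-A) - 2 * ip (B-A) (C-A) + nsq (C-A) := by
      unfold nsq ip
      simp only [Pi.sub_apply]
      ring
    rw [hu, hv, hbc] at h
    linarith
  obtain ⟨δ, hδdef⟩ : ∃ δ : ℝ, δ = (B-A) 0 * (C-A) 1 - (B-A) 1 * (C-A) 0 := ⟨_, rfl⟩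
  have hδ2 : δ^2 = 3/4 := by
    have h : δ^2 = nsq (B-A) * nsq (C-A) - (ip (B-A) (C-A))^2 := by
      rw [hδdef]
      unfold nsq ip
      ring
    rw [hu, hv, hip] at h
    norm_num at h
    exact h
  have hδ : δ ≠ 0 := by
    intro h
    rw [h] at hδ2
    norm_num at hδ2
  obtain ⟨s, hsdef⟩ : ∃ s : ℝ, s = ((x-A) 0 * (C-A) 1 - (x-A) 1 * (C-A) 0)/δ := ⟨_, rfl⟩
  obtain ⟨t, htdef⟩ : ∃ t : ℝ, t = ((B-A) 0 * (x-A) 1 - (B-A) 1 * (x-A) 0)/δ := ⟨_, rfl⟩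
  have hd0 : (x - A) 0 = s * (B-A) 0 + t * (C-A) 0 := by
    rw [hsdef, htdef, div_mul_eq_mul_div, div_mul_eq_mul_div, ← add_div,
      eq_div_iff hδ, hδdef]
    ring
  have hd1 : (x - A) 1 = s * (B-A) 1 + t * (C-A) 1 := by
    rw [hsdef, htdef, div_mul_eq_mul_div, div_mul_eq_mul_div, ← add_div,
      eq_div_iff hδ, hδdef]
    ring
  have hdx : ∀ i, x i - A i = s * (B-A) i + t * (C-A) i := by
    intro i
    fin_cases i
    · exact hd0
    · exact hd1
  have hQeq : nsq (x - A) = s^2 + s*t + t^2 := by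
    have hfun : (x - A) = fun i => s * (B-A) i + t * (C-A) i := by
      funext i
      exact hdx i
    rw [hfun]
    exact nsq_combo _ _ hu hv hip s t
  have hQpos : 0 < nsq (x - A) := by
    rcases (nsq_nonneg (x - A)).lt_or_eq with h | h
    · exact h
    · exfalso
      apply hne
      have h0 : (x - A) 0 ^ 2 = 0 := by
        have := sq_nonneg ((x - A) 1)
        unfold nsq at h
        nlinarith [sq_nonneg ((x-A) 0)]
      have h1 : (x - A) 1 ^ 2 = 0 := by
        unfold nsq at h
        nlinarith [sq_nonneg ((x-A) 1)]
      have hx0 : x 0 = A 0 := by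
        have := pow_eq_zero_iff (n := 2) (by norm_num) |>.mp h0
        simpa [sub_eq_zero] using this
      have hx1 : x 1 = A 1 := by
        have := pow_eq_zero_iff (n := 2) (by norm_num) |>.mp h1
        simpa [sub_eq_zero] using this
      funext i
      fin_cases i
      · exact hx0
      · exact hx1
  have hQp : 0 < s^2 + s*t + t^2 := hQeq ▸ hQpos
  have hQl : s^2 + s*t + t^2 < 3/4 := hQeq ▸ hxA
  have main : ∃ p : Fin 2 → ℝ, nsq (p - x) < 1/4 ∧ nsq (p - A) = 1/4 ∧
      p ∉ convexHull ℝ ({A, B, C} : Set (Fin 2 → ℝ)) := by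
    rcases le_total t s with hts | hst
    · obtain ⟨a, b, hb, hab, hfar⟩ :
          ∃ a b : ℝ, b < 0 ∧ a^2 + a*b + b^2 = 1/4 ∧
            (a-s)^2 + (a-s)*(b-t) + (b-t)^2 < 1/4 := by
        rcases lt_or_ge t 0 with ht | ht
        · exact bad_point_neg ht hQp hQl
        · exact bad_point_pos ht hts hQp hQl
      obtain ⟨p, hp1, hp2, hp3⟩ := vertex_contra A x (B-A) (C-A) hu hv hip (hδdef ▸ hδ) s t a b
        hdx hb hab hfar
      refine ⟨p, hp1, hp2, ?_⟩
      intro hmem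
      rw [mem_hull_iff] at hmem
      obtain ⟨a', b', c', ha', hb', hc', hsum, hcoord⟩ := hmem
      refine hp3 b' c' hc' ?_
      intro i
      have h := hcoord i
      simp only [Pi.sub_apply]
      linear_combination h + A i * hsum
    · have hip' : ip (C - A) (B - A) = 1/2 := by
        rw [← hip]; unfold ip; ring
      have hδ' : (C-A) 0 * (B-A) 1 - (C-A) 1 * (B-A) 0 ≠ 0 := by
        intro h
        apply hδ
        rw [hδdef]
        linarith
      obtain ⟨a, b, hb, hab, hfar⟩ :
          ∃ a b : ℝ, b < 0 ∧ a^2 + a*b + b^2 = 1/4 ∧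
            (a-t)^2 + (a-t)*(b-s) + (b-s)^2 < 1/4 := by
        have hQp' : 0 < t^2+t*s+s^2 := by nlinarith [hQp]
        have hQl' : t^2+t*s+s^2 < 3/4 := by nlinarith [hQl]
        rcases lt_or_ge s 0 with hs | hs
        · exact bad_point_neg hs hQp' hQl'
        · exact bad_point_pos hs hst hQp' hQl'
      obtain ⟨p, hp1, hp2, hp3⟩ := vertex_contra A x (C-A) (B-A) hv hu hip' hδ' t s a b
        (by intro i; linarith [hdx i]) hb hab hfar
      refine ⟨p, hp1, hp2, ?_⟩
      intro hmem
      rw [mem_hull_iff] at hmem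
      obtain ⟨a', b', c', ha', hb', hc', hsum, hcoord⟩ := hmem
      refine hp3 c' b' hb' ?_
      intro i
      have h := hcoord i
      simp only [Pi.sub_apply]
      linear_combination h + A i * hsum
  obtain ⟨p, hp1, hp2, hp3⟩ := main
  rcases hsub p hp1 with hc | hc | hc | hc
  · linarith [hp2 ▸ hc]
  · have hfarB := far_lemma (p - A) (B - A) hp2 hu
    rw [show (p - A) - (B - A) = p - B from by abel] at hfarB
    linarith
  · have hfarC := far_lemma (p - A) (C - A) hp2 hv
    rw [show (p - A) - (C - A) = p - C from by abel] at hfarC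
    linarith
  · exact hp3 hc



lemma nsq_sub_comm (a b : Fin 2 → ℝ) : nsq (a - b) = nsq (b - a) := by
  unfold nsq
  simp only [Pi.sub_apply]
  ring


lemma hull_perm1 (A B C : Fin 2 → ℝ) :
    ({A, B, C} : Set (Fin 2 → ℝ)) = {B, A, C} := by
  ext z; simp; tauto


lemma hull_perm2 (A B C : Fin 2 → ℝ) :
    ({A, B, C} : Set (Fin 2 → ℝ)) = {C, A, B} := by
  ext z; simp; tauto


lemma center_eq (A B C y : Fin 2 → ℝ)
    (h1 : nsq (B-A) = 1) (h2 : nsq (C-A) = 1) (h3 : nsq (B-C) = 1)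
    (hsub : ∀ p : Fin 2 → ℝ, nsq (p - y) < 1/4 →
      nsq (p - A) < 1/4 ∨ nsq (p - B) < 1/4 ∨ nsq (p - C) < 1/4 ∨
        p ∈ convexHull ℝ ({A, B, C} : Set (Fin 2 → ℝ)))
    (hy : nsq (y - A) < 1/4 ∨ nsq (y - B) < 1/4 ∨ nsq (y - C) < 1/4 ∨
        y ∈ convexHull ℝ ({A, B, C} : Set (Fin 2 → ℝ))) :
    y = A ∨ y = B ∨ y = C := by
  have hip : ip (B - A) (C - A) = 1/2 := by
    have h : nsq (B - C) = nsq (B-A) - 2 * ip (B-A) (C-A) + nsq (C-A) := by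
      unfold nsq ip
      simp only [Pi.sub_apply]
      ring
    rw [h1, h2, h3] at h
    linarith
  have hnear : nsq (y - A) < 3/4 ∨ nsq (y - B) < 3/4 ∨ nsq (y - C) < 3/4 := by
    rcases hy with h | h | h | h
    · exact Or.inl (by linarith)
    · exact Or.inr (Or.inl (by linarith))
    · exact Or.inr (Or.inr (by linarith))
    · rw [mem_hull_iff] at h
      obtain ⟨a, b, c, ha, hb, hc, hsum, hcoord⟩ := h
      have hyA : y - A = fun i => b * (B-A) i + c * (C-A) i := by
        funext i
        simp only [Pi.sub_apply]
        linear_combination hcoord i + A i * hsum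
      have hyB : y - B = fun i => (b-1) * (B-A) i + c * (C-A) i := by
        funext i
        simp only [Pi.sub_apply]
        linear_combination hcoord i + A i * hsum
      have hyC : y - C = fun i => b * (B-A) i + (c-1) * (C-A) i := by
        funext i
        simp only [Pi.sub_apply]
        linear_combination hcoord i + A i * hsum
      rcases le_total a (1/3) with haa | haa
      · rcases le_total b (1/3) with hbb | hbb
        · -- c ≥ 1/3, use C
          refine Or.inr (Or.inr ?_)
          rw [hyC, nsq_combo _ _ h1 h2 hip]
          nlinarith
        · refine Or.inr (Or.inl ?_)
          rw [hyB, nsq_combo _ _ h1 h2 hip]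
          nlinarith
      · refine Or.inl ?_
        rw [hyA, nsq_combo _ _ h1 h2 hip]
        nlinarith
  rcases hnear with h | h | h
  · exact Or.inl (key_vertex A B C y h1 h2 h3 hsub h)
  · refine Or.inr (Or.inl ?_)
    refine key_vertex B A C y (nsq_sub_comm A B ▸ h1) (nsq_sub_comm C B ▸ (nsq_sub_comm B C ▸ h3)) ?_ ?_ h
    · exact (nsq_sub_comm A C ▸ (nsq_sub_comm C A ▸ h2))
    · intro p hp
      rcases hsub p hp with hc | hc | hc | hc
      · exact Or.inr (Or.inl hc)
      · exact Or.inl hc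
      · exact Or.inr (Or.inr (Or.inl hc))
      · rw [hull_perm1] at hc
        exact Or.inr (Or.inr (Or.inr hc))
  · refine Or.inr (Or.inr ?_)
    refine key_vertex C A B y ?_ ?_ ?_ ?_ h
    · exact nsq_sub_comm A C ▸ (nsq_sub_comm C A ▸ h2)
    · exact h3
    · exact nsq_sub_comm A B ▸ h1
    · intro p hp
      rcases hsub p hp with hc | hc | hc | hc
      · exact Or.inr (Or.inl hc)
      · exact Or.inr (Or.inr (Or.inl hc))
      · exact Or.inl hc
      · rw [hull_perm2] at hc
        exact Or.inr (Or.inr (Or.inr hc))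



lemma ip_eq (A B C : Fin 2 → ℝ)
    (h1 : nsq (B-A) = 1) (h2 : nsq (C-A) = 1) (h3 : nsq (B-C) = 1) :
    ip (B - A) (C - A) = 1/2 := by
  have h : nsq (B - C) = nsq (B-A) - 2 * ip (B-A) (C-A) + nsq (C-A) := by
    unfold nsq ip
    simp only [Pi.sub_apply]
    ring
  rw [h1, h2, h3] at h
  linarith


lemma delta_ne (A B C : Fin 2 → ℝ)
    (h1 : nsq (B-A) = 1) (h2 : nsq (C-A) = 1) (h3 : nsq (B-C) = 1) :
    (B-A) 0 * (C-A) 1 - (B-A) 1 * (C-A) 0 ≠ 0 := by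
  have hip := ip_eq A B C h1 h2 h3
  have h : ((B-A) 0 * (C-A) 1 - (B-A) 1 * (C-A) 0)^2
      = nsq (B-A) * nsq (C-A) - (ip (B-A) (C-A))^2 := by
    unfold nsq ip
    ring
  rw [h1, h2, hip] at h
  intro hz
  rw [hz] at h
  norm_num at h


def cfun (A w : Fin 2 → ℝ) (δ : ℝ) : (Fin 2 → ℝ) → ℝ :=
  fun y => ((y 0 - A 0) * w 1 - (y 1 - A 1) * w 0)/δ


lemma cfun_cont (A w : Fin 2 → ℝ) (δ : ℝ) : Continuous (cfun A w δ) := by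
  unfold cfun
  have h0 : Continuous (fun y : Fin 2 → ℝ => y 0) := continuous_apply 0
  have h1 : Continuous (fun y : Fin 2 → ℝ => y 1) := continuous_apply 1
  exact (((h0.sub continuous_const).mul continuous_const).sub
    ((h1.sub continuous_const).mul continuous_const)).div_const δ


lemma interior_T (A B C x : Fin 2 → ℝ)
    (h1 : nsq (B-A) = 1) (h2 : nsq (C-A) = 1) (h3 : nsq (B-C) = 1)
    (hx : x ∈ convexHull ℝ ({A,B,C} : Set (Fin 2 → ℝ)))
    (dA : 1/4 < nsq (x - A)) (dB : 1/4 < nsq (x - B)) (dC : 1/4 < nsq (x - C)) :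
    ∃ U : Set (Fin 2 → ℝ), IsOpen U ∧ x ∈ U ∧
      U ⊆ convexHull ℝ ({A,B,C} : Set (Fin 2 → ℝ)) := by
  have hip := ip_eq A B C h1 h2 h3
  have hδ := delta_ne A B C h1 h2 h3
  obtain ⟨δ, hδdef⟩ : ∃ δ : ℝ, δ = (B-A) 0 * (C-A) 1 - (B-A) 1 * (C-A) 0 := ⟨_, rfl⟩
  rw [← hδdef] at hδ
  rw [mem_hull_iff] at hx
  obtain ⟨a, b, c, ha, hb, hc, hsum, hcoord⟩ := hx
  have hyA : x - A = fun i => b * (B-A) i + c * (C-A) i := by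
    funext i
    simp only [Pi.sub_apply]
    linear_combination hcoord i + A i * hsum
  have hyB : x - B = fun i => (b-1) * (B-A) i + c * (C-A) i := by
    funext i
    simp only [Pi.sub_apply]
    linear_combination hcoord i + A i * hsum
  have hyC : x - C = fun i => b * (B-A) i + (c-1) * (C-A) i := by
    funext i
    simp only [Pi.sub_apply]
    linear_combination hcoord i + A i * hsum
  rw [hyA, nsq_combo _ _ h1 h2 hip] at dA
  rw [hyB, nsq_combo _ _ h1 h2 hip] at dB
  rw [hyC, nsq_combo _ _ h1 h2 hip] at dC
  have hbc1 : b + c ≤ 1 := by linarith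
  have hb0 : 0 < b := by
    rcases hb.lt_or_eq with h | h
    · exact h
    exfalso
    rw [← h] at dA dC
    norm_num at dA dC
    nlinarith [dA, dC, hc, hbc1, sq_nonneg (2*c - 1)]
  have hc0 : 0 < c := by
    rcases hc.lt_or_eq with h | h
    · exact h
    exfalso
    rw [← h] at dA dB
    norm_num at dA dB
    nlinarith [dA, dB, hb, hbc1, sq_nonneg (2*b - 1)]
  have hbc : b + c < 1 := by
    rcases hbc1.lt_or_eq with h | h
    · exact h
    exfalso
    nlinarith [dB, dC, hb, hc, h, sq_nonneg (2*b - 1)]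
  refine ⟨{y | 0 < cfun A (C-A) δ y ∧ 0 < cfun A (A-B) δ y ∧
      cfun A (C-A) δ y + cfun A (A-B) δ y < 1}, ?_, ?_, ?_⟩
  · have e1 : IsOpen {y : Fin 2 → ℝ | 0 < cfun A (C-A) δ y} :=
      isOpen_lt continuous_const (cfun_cont A (C-A) δ)
    have e2 : IsOpen {y : Fin 2 → ℝ | 0 < cfun A (A-B) δ y} :=
      isOpen_lt continuous_const (cfun_cont A (A-B) δ)
    have e3 : IsOpen {y : Fin 2 → ℝ | cfun A (C-A) δ y + cfun A (A-B) δ y < 1} :=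
      isOpen_lt ((cfun_cont A (C-A) δ).add (cfun_cont A (A-B) δ)) continuous_const
    exact e1.inter (e2.inter e3)
  · have e0 := congrFun hyA 0
    have e1 := congrFun hyA 1
    have hδdef' : δ = (B 0 - A 0) * (C 1 - A 1) - (B 1 - A 1) * (C 0 - A 0) := by
      rw [hδdef]; simp only [Pi.sub_apply]
    simp only [Pi.sub_apply] at e0 e1
    have hcb : cfun A (C-A) δ x = b := by
      unfold cfun
      rw [div_eq_iff hδ]
      simp only [Pi.sub_apply]
      linear_combination (C 1 - A 1) * e0 - (C 0 - A 0) * e1 - b * hδdef'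
    have hcc : cfun A (A-B) δ x = c := by
      unfold cfun
      rw [div_eq_iff hδ]
      simp only [Pi.sub_apply]
      linear_combination (A 1 - B 1) * e0 - (A 0 - B 0) * e1 - c * hδdef'
    refine ⟨?_, ?_, ?_⟩
    · rw [hcb]; exact hb0
    · rw [hcc]; exact hc0
    · rw [hcb, hcc]; exact hbc
  · intro y hy
    obtain ⟨hy1, hy2, hy3⟩ := hy
    rw [mem_hull_iff]
    refine ⟨1 - cfun A (C-A) δ y - cfun A (A-B) δ y, cfun A (C-A) δ y, cfun A (A-B) δ y,
      by linarith, hy1.le, hy2.le, by ring, ?_⟩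
    intro i
    unfold cfun
    rw [hδdef]
    have hδ' : (B-A) 0 * (C-A) 1 - (B-A) 1 * (C-A) 0 ≠ 0 := hδdef ▸ hδ
    simp only [Pi.sub_apply] at hδ' ⊢
    fin_cases i <;>
      · simp only [Fin.zero_eta, Fin.mk_one, Fin.isValue] at hδ' ⊢
        generalize hD : (B 0 - A 0) * (C 1 - A 1) - (B 1 - A 1) * (C 0 - A 0) = D at hδ' ⊢
        field_simp
        subst hD
        ring



lemma euclNorm_le_iff {v : Fin 2 → ℝ} {r : ℝ} (hr : 0 ≤ r) :
    euclNorm v ≤ r ↔ nsq v ≤ r ^ 2 := by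
  rw [show euclNorm v = Real.sqrt (nsq v) from rfl, Real.sqrt_le_iff]
  exact ⟨fun h => h.2, fun h => ⟨hr, h⟩⟩

end PCEX

open PCEX in
/-- Convexity is essential in Statement 4: for the union `E` of the
three open balls of radius `1/2` centered at the vertices `A, B, C` of an equilateral
triangle of side length `1` together with the closed triangle, `E` satisfies the
`(1/2)W`-condition for the Euclidean norm, yet its plaquette
`E^{1/2} = B_{1/2}(A) ∪ B_{1/2}(B) ∪ B_{1/2}(C)` differs from `E`. -/
theorem plaquette_counterexample (A B C : Fin 2 → ℝ)
    (hAB : euclNorm (A - B) = 1) (hBC : euclNorm (B - C) = 1)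
    (hCA : euclNorm (C - A) = 1)
    (E : Set (Fin 2 → ℝ))
    (hE : E = wulffBall euclNorm A (1 / 2) ∪ wulffBall euclNorm B (1 / 2) ∪
      wulffBall euclNorm C (1 / 2) ∪ convexHull ℝ {A, B, C}) :
    rWCond euclNorm E (1 / 2) ∧
    plaquette euclNorm E (1 / 2) =
      wulffBall euclNorm A (1 / 2) ∪ wulffBall euclNorm B (1 / 2) ∪
        wulffBall euclNorm C (1 / 2) ∧
    plaquette euclNorm E (1 / 2) ≠ E := by
  have hone : (0:ℝ) ≤ 1 := by norm_num
  have nAB : nsq (B - A) = 1 := by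
    have h := (euclNorm_eq_iff hone).mp hAB
    rw [nsq_sub_comm]
    simpa using h
  have nCA : nsq (C - A) = 1 := by
    have h := (euclNorm_eq_iff hone).mp hCA
    simpa using h
  have nBC : nsq (B - C) = 1 := by
    have h := (euclNorm_eq_iff hone).mp hBC
    simpa using h
  have hip := ip_eq A B C nAB nCA nBC
  have hne2 : (1/2 : ℝ) ≠ 0 := by norm_num
  have hhalf : (0:ℝ) < 1/2 := by norm_num
  have memball : ∀ V z : Fin 2 → ℝ, z ∈ wulffBall euclNorm V (1/2) ↔ nsq (z - V) < 1/4 := by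
    intro V z
    rw [show (z ∈ wulffBall euclNorm V (1/2)) ↔ euclNorm (z - V) < 1/2 from Iff.rfl,
      euclNorm_lt_iff hhalf]
    norm_num
  have hBallA : wulffBall euclNorm A (1/2) ⊆ E := by
    rw [hE]; intro z hz; exact Or.inl (Or.inl (Or.inl hz))
  have hBallB : wulffBall euclNorm B (1/2) ⊆ E := by
    rw [hE]; intro z hz; exact Or.inl (Or.inl (Or.inr hz))
  have hBallC : wulffBall euclNorm C (1/2) ⊆ E := by
    rw [hE]; intro z hz; exact Or.inl (Or.inr hz)
  have hTE : convexHull ℝ ({A, B, C} : Set (Fin 2 → ℝ)) ⊆ E := by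
    rw [hE]; intro z hz; exact Or.inr hz
  have hEmem : ∀ z, z ∈ E → nsq (z - A) < 1/4 ∨ nsq (z - B) < 1/4 ∨ nsq (z - C) < 1/4 ∨
      z ∈ convexHull ℝ ({A,B,C} : Set (Fin 2 → ℝ)) := by
    intro z hz
    rw [hE] at hz
    rcases hz with ((h|h)|h)|h
    · exact Or.inl ((memball A z).mp h)
    · exact Or.inr (Or.inl ((memball B z).mp h))
    · exact Or.inr (Or.inr (Or.inl ((memball C z).mp h)))
    · exact Or.inr (Or.inr (Or.inr h))
  have hTclosed : IsClosed (convexHull ℝ ({A,B,C} : Set (Fin 2 → ℝ))) := by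
    have hfin : ({A,B,C} : Set (Fin 2 → ℝ)).Finite := by
      apply Set.Finite.insert
      apply Set.Finite.insert
      exact finite_singleton C
    exact (hfin.isCompact_convexHull (𝕜 := ℝ)).isClosed
  -- Part 2 first (used in part 3)
  have hplaq : plaquette euclNorm E (1/2) =
      ⋃ (y) (_ : wulffBall euclNorm y (1/2) ⊆ E), wulffBall euclNorm y (1/2) := by
    simp only [plaquette]
    rw [if_neg hne2]
  have part2 : plaquette euclNorm E (1 / 2) =
      wulffBall euclNorm A (1 / 2) ∪ wulffBall euclNorm B (1 / 2) ∪
        wulffBall euclNorm C (1 / 2) := by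
    rw [hplaq]
    apply subset_antisymm
    · intro z hz
      simp only [mem_iUnion] at hz
      obtain ⟨y, hyE, hzy⟩ := hz
      have hyy : y ∈ E := hyE ((memball y y).mpr (by
        rw [sub_self]
        show (0:ℝ)^2 + (0:ℝ)^2 < 1/4
        norm_num))
      have hsub : ∀ p : Fin 2 → ℝ, nsq (p - y) < 1/4 →
          nsq (p - A) < 1/4 ∨ nsq (p - B) < 1/4 ∨ nsq (p - C) < 1/4 ∨
            p ∈ convexHull ℝ ({A,B,C} : Set (Fin 2 → ℝ)) :=
        fun p hp => hEmem p (hyE ((memball y p).mpr hp))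
      rcases center_eq A B C y nAB nCA nBC hsub (hEmem y hyy) with rfl | rfl | rfl
      · exact Or.inl (Or.inl hzy)
      · exact Or.inl (Or.inr hzy)
      · exact Or.inr hzy
    · intro z hz
      simp only [mem_iUnion]
      rcases hz with (h|h)|h
      · exact ⟨A, hBallA, h⟩
      · exact ⟨B, hBallB, h⟩
      · exact ⟨C, hBallC, h⟩
  refine ⟨?_, part2, ?_⟩
  · -- rW condition
    intro x hx
    have hxc : x ∈ closure E := hx.1
    have hxi : x ∉ interior E := hx.2
    have hop : IsOpen (wulffBall euclNorm A (1/2) ∪ wulffBall euclNorm B (1/2) ∪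
        wulffBall euclNorm C (1/2)) :=
      ((isOpen_wulff A _).union (isOpen_wulff B _)).union (isOpen_wulff C _)
    have hsubint : wulffBall euclNorm A (1/2) ∪ wulffBall euclNorm B (1/2) ∪
        wulffBall euclNorm C (1/2) ⊆ interior E :=
      interior_maximal (by rw [hE]; exact subset_union_left) hop
    have hnA : ¬ nsq (x - A) < 1/4 :=
      fun h => hxi (hsubint (Or.inl (Or.inl ((memball A x).mpr h))))
    have hnB : ¬ nsq (x - B) < 1/4 :=
      fun h => hxi (hsubint (Or.inl (Or.inr ((memball B x).mpr h))))
    have hnC : ¬ nsq (x - C) < 1/4 :=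
      fun h => hxi (hsubint (Or.inr ((memball C x).mpr h)))
    have hvertex : ∀ V : Fin 2 → ℝ, wulffBall euclNorm V (1/2) ⊆ E → nsq (x - V) = 1/4 →
        ∃ y, wulffBall euclNorm y (1/2) ⊆ E ∧ x ∈ frontier (wulffBall euclNorm y (1/2)) := by
      intro V hVE hV
      refine ⟨V, hVE, ?_⟩
      rw [frontier_wulff V hne2]
      show euclNorm (x - V) = 1/2
      rw [euclNorm_eq_iff (by norm_num : (0:ℝ) ≤ 1/2), hV]
      norm_num
    have hxcl : nsq (x - A) ≤ 1/4 ∨ nsq (x - B) ≤ 1/4 ∨ nsq (x - C) ≤ 1/4 ∨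
        x ∈ convexHull ℝ ({A,B,C} : Set (Fin 2 → ℝ)) := by
      rw [hE, closure_union, closure_union, closure_union, hTclosed.closure_eq,
        closure_wulff A hne2, closure_wulff B hne2, closure_wulff C hne2] at hxc
      have conv : ∀ V : Fin 2 → ℝ, x ∈ {y | euclNorm (y - V) ≤ 1/2} → nsq (x - V) ≤ 1/4 := by
        intro V h
        have := (euclNorm_le_iff (by norm_num : (0:ℝ) ≤ 1/2)).mp h
        norm_num at this
        exact this
      rcases hxc with ((h|h)|h)|h
      · exact Or.inl (conv A h)
      · exact Or.inr (Or.inl (conv B h))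
      · exact Or.inr (Or.inr (Or.inl (conv C h)))
      · exact Or.inr (Or.inr (Or.inr h))
    rcases hxcl with h | h | h | h
    · exact hvertex A hBallA (le_antisymm h (not_lt.mp hnA))
    · exact hvertex B hBallB (le_antisymm h (not_lt.mp hnB))
    · exact hvertex C hBallC (le_antisymm h (not_lt.mp hnC))
    · rcases le_or_gt (nsq (x - A)) (1/4) with hA' | hA'
      · exact hvertex A hBallA (le_antisymm hA' (not_lt.mp hnA))
      rcases le_or_gt (nsq (x - B)) (1/4) with hB' | hB'
      · exact hvertex B hBallB (le_antisymm hB' (not_lt.mp hnB))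
      rcases le_or_gt (nsq (x - C)) (1/4) with hC' | hC'
      · exact hvertex C hBallC (le_antisymm hC' (not_lt.mp hnC))
      exfalso
      obtain ⟨U, hUopen, hxU, hUT⟩ := interior_T A B C x nAB nCA nBC h hA' hB' hC'
      exact hxi (mem_interior.mpr ⟨U, hUT.trans hTE, hUopen, hxU⟩)
  · -- plaquette ≠ E
    rw [part2]
    intro heq
    have hGT : (fun i => (A i + B i + C i)/3) ∈ convexHull ℝ ({A,B,C} : Set (Fin 2 → ℝ)) := by
      rw [mem_hull_iff]
      exact ⟨1/3, 1/3, 1/3, by norm_num, by norm_num, by norm_num, by norm_num,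
        fun i => by ring⟩
    have hGE : (fun i => (A i + B i + C i)/3) ∈ E := hTE hGT
    rw [← heq] at hGE
    have hGA : (fun i => (A i + B i + C i)/3) - A
        = fun i => (1/3 : ℝ) * (B-A) i + (1/3 : ℝ) * (C-A) i := by
      funext i
      simp only [Pi.sub_apply]
      ring
    have hGB : (fun i => (A i + B i + C i)/3) - B
        = fun i => (-2/3 : ℝ) * (B-A) i + (1/3 : ℝ) * (C-A) i := by
      funext i
      simp only [Pi.sub_apply]
      ring
    have hGC : (fun i => (A i + B i + C i)/3) - C
        = fun i => (1/3 : ℝ) * (B-A) i + (-2/3 : ℝ) * (C-A) i := by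
      funext i
      simp only [Pi.sub_apply]
      ring
    rcases hGE with (h|h)|h
    · rw [memball, hGA, nsq_combo _ _ nAB nCA hip] at h
      norm_num at h
    · rw [memball, hGB, nsq_combo _ _ nAB nCA hip] at h
      norm_num at h
    · rw [memball, hGC, nsq_combo _ _ nAB nCA hip] at h
      norm_num at h

end
end

section
/- Let φ be a norm on ℝ², let E ⊆ ℝ² be a convex set, and let r > 0. Then the Wulff plaquette E^r = ⋃{ W_r(x) : W_r(x) ⊆ E } is convex, and E^r satisfies the rW_φ-condition. -/
open MeasureTheory Set ENNReal Filter

noncomputable section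

namespace PlaqAux

variable {φ : (Fin 2 → ℝ) → ℝ}

lemma norm_zero (hφ : IsNorm φ) : φ 0 = 0 := (hφ.eq_zero_iff 0).mpr rfl

lemma norm_neg (hφ : IsNorm φ) (x : Fin 2 → ℝ) : φ (-x) = φ x := by
  have h := hφ.smul_eq (-1) x
  simpa using h

lemma norm_sub_le (hφ : IsNorm φ) (a b c : Fin 2 → ℝ) :
    φ (a - c) ≤ φ (a - b) + φ (b - c) := by
  have h := hφ.add_le (a - b) (b - c)
  simpa using h

lemma le_C_norm (hφ : IsNorm φ) (a : Fin 2 → ℝ) :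
    φ a ≤ (φ (Pi.single 0 1) + φ (Pi.single 1 1)) * ‖a‖ := by
  have ha : a = a 0 • (Pi.single 0 1 : Fin 2 → ℝ) + a 1 • (Pi.single 1 1 : Fin 2 → ℝ) := by
    funext i
    fin_cases i <;> simp [Pi.single_apply]
  have h0 : |a 0| ≤ ‖a‖ := by
    simpa [Real.norm_eq_abs] using norm_le_pi_norm a 0
  have h1 : |a 1| ≤ ‖a‖ := by
    simpa [Real.norm_eq_abs] using norm_le_pi_norm a 1
  calc φ a = φ (a 0 • (Pi.single 0 1 : Fin 2 → ℝ) + a 1 • (Pi.single 1 1 : Fin 2 → ℝ)) := by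
        rw [← ha]
    _ ≤ φ (a 0 • (Pi.single 0 1 : Fin 2 → ℝ)) + φ (a 1 • (Pi.single 1 1 : Fin 2 → ℝ)) :=
        hφ.add_le _ _
    _ = |a 0| * φ (Pi.single 0 1) + |a 1| * φ (Pi.single 1 1) := by
        rw [hφ.smul_eq, hφ.smul_eq]
    _ ≤ ‖a‖ * φ (Pi.single 0 1) + ‖a‖ * φ (Pi.single 1 1) := by
        have := hφ.nonneg (Pi.single (0 : Fin 2) (1:ℝ))
        have := hφ.nonneg (Pi.single (1 : Fin 2) (1:ℝ))
        gcongr <;> assumption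
    _ = (φ (Pi.single 0 1) + φ (Pi.single 1 1)) * ‖a‖ := by ring

lemma continuous_of_isNorm (hφ : IsNorm φ) : Continuous φ := by
  set C := φ (Pi.single 0 1) + φ (Pi.single 1 1) with hC
  have hC0 : 0 ≤ C := by
    have := hφ.nonneg (Pi.single (0 : Fin 2) (1:ℝ))
    have := hφ.nonneg (Pi.single (1 : Fin 2) (1:ℝ))
    positivity
  have hlip : LipschitzWith C.toNNReal φ := by
    apply LipschitzWith.of_dist_le_mul
    intro a b
    have habs : |φ a - φ b| ≤ φ (a - b) := by
      rw [abs_sub_le_iff]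
      constructor
      · have h := hφ.add_le (a - b) b
        simp only [sub_add_cancel] at h
        linarith
      · have h := hφ.add_le (b - a) a
        simp only [sub_add_cancel] at h
        have : φ (b - a) = φ (a - b) := by
          rw [← norm_neg hφ (b - a)]; congr 1; abel
        linarith
    have hle : φ (a - b) ≤ C * ‖a - b‖ := le_C_norm hφ (a - b)
    rw [Real.dist_eq, dist_eq_norm]
    calc |φ a - φ b| ≤ C * ‖a - b‖ := le_trans habs hle
      _ = (C.toNNReal : ℝ) * ‖a - b‖ := by rw [Real.coe_toNNReal C hC0]
  exact hlip.continuous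

lemma wulff_open (hφ : IsNorm φ) (y : Fin 2 → ℝ) (r : ℝ) :
    IsOpen (wulffBall φ y r) := by
  have : wulffBall φ y r = (fun z => φ (z - y)) ⁻¹' Iio r := rfl
  rw [this]
  exact isOpen_Iio.preimage ((continuous_of_isNorm hφ).comp (continuous_id.sub continuous_const))

lemma exists_lower_bound (hφ : IsNorm φ) :
    ∃ m > (0:ℝ), ∀ v : Fin 2 → ℝ, m * ‖v‖ ≤ φ v := by
  have hcont : Continuous φ := continuous_of_isNorm hφ
  have hne : (Metric.sphere (0 : Fin 2 → ℝ) 1).Nonempty :=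
    NormedSpace.sphere_nonempty.mpr zero_le_one
  obtain ⟨v0, hv0, hmin⟩ :=
    (isCompact_sphere (0 : Fin 2 → ℝ) 1).exists_isMinOn hne hcont.continuousOn
  have hv0n : ‖v0‖ = 1 := by simpa using hv0
  have hv0ne : v0 ≠ 0 := by
    intro h; rw [h] at hv0n; simp at hv0n
  have hm : 0 < φ v0 := by
    rcases (hφ.nonneg v0).lt_or_eq with h | h
    · exact h
    · exact absurd ((hφ.eq_zero_iff v0).mp h.symm) hv0ne
  refine ⟨φ v0, hm, fun v => ?_⟩
  by_cases hv : v = 0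
  · simp [hv, norm_zero hφ]
  · have hnv : 0 < ‖v‖ := norm_pos_iff.mpr hv
    have hunit : ‖v‖⁻¹ • v ∈ Metric.sphere (0 : Fin 2 → ℝ) 1 := by
      simp [norm_smul, abs_of_pos (inv_pos.mpr hnv), inv_mul_cancel₀ hnv.ne']
    have h2 : φ v0 ≤ φ (‖v‖⁻¹ • v) := hmin hunit
    rw [hφ.smul_eq, abs_inv, abs_norm] at h2
    have h3 : (‖v‖⁻¹ * φ v) * ‖v‖ = φ v := by field_simp
    nlinarith [mul_le_mul_of_nonneg_right h2 hnv.le]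

lemma ball_combo (hφ : IsNorm φ) {E : Set (Fin 2 → ℝ)} (hE : Convex ℝ E) {r : ℝ}
    {x y : Fin 2 → ℝ} (hx : wulffBall φ x r ⊆ E) (hy : wulffBall φ y r ⊆ E)
    {t s : ℝ} (ht : 0 ≤ t) (hs : 0 ≤ s) (hts : t + s = 1) :
    wulffBall φ (t • x + s • y) r ⊆ E := by
  intro z hz
  have hs' : s = 1 - t := by linarith
  subst hs'
  set d := z - (t • x + (1 - t) • y) with hd
  have hdφ : φ d < r := hz
  have hx' : x + d ∈ E := hx (show φ (x + d - x) < r by simpa using hdφ)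
  have hy' : y + d ∈ E := hy (show φ (y + d - y) < r by simpa using hdφ)
  have hz' : z = t • (x + d) + (1 - t) • (y + d) := by
    rw [hd]; module
  rw [hz']
  exact hE hx' hy' ht (by linarith) (by ring)

end PlaqAux

open scoped Pointwise

/-- For a convex set `E ⊆ ℝ²` and `r > 0`, the Wulff plaquette `E^r`
is convex and satisfies the `rW_φ`-condition. -/
theorem plaquette_convex_and_rWCond (φ : (Fin 2 → ℝ) → ℝ) (hφ : IsNorm φ)
    (E : Set (Fin 2 → ℝ)) (hEconv : Convex ℝ E) (r : ℝ) (hr : 0 < r) :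
    Convex ℝ (plaquette φ E r) ∧ rWCond φ (plaquette φ E r) r := by
  classical
  have hrne : r ≠ 0 := ne_of_gt hr
  have hplaq : plaquette φ E r = ⋃ (x) (_ : wulffBall φ x r ⊆ E), wulffBall φ x r :=
    if_neg hrne
  have hcont : Continuous φ := PlaqAux.continuous_of_isNorm hφ
  constructor
  · -- convexity
    rw [hplaq]
    intro a ha b hb t s ht hs hts
    simp only [mem_iUnion] at ha hb ⊢
    obtain ⟨x, hxE, hax⟩ := ha
    obtain ⟨y, hyE, hby⟩ := hb
    refine ⟨t • x + s • y, PlaqAux.ball_combo hφ hEconv hxE hyE ht hs hts, ?_⟩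
    show φ (t • a + s • b - (t • x + s • y)) < r
    have heq : t • a + s • b - (t • x + s • y) = t • (a - x) + s • (b - y) := by module
    rw [heq]
    have h1 : φ (t • (a - x) + s • (b - y)) ≤ t * φ (a - x) + s * φ (b - y) := by
      calc φ (t • (a - x) + s • (b - y)) ≤ φ (t • (a - x)) + φ (s • (b - y)) :=
            hφ.add_le _ _
        _ = t * φ (a - x) + s * φ (b - y) := by
            rw [hφ.smul_eq, hφ.smul_eq, abs_of_nonneg ht, abs_of_nonneg hs]
    have hax' : φ (a - x) < r := hax
    have hby' : φ (b - y) < r := hby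
    have key : t * φ (a - x) + s * φ (b - y) < r := by
      rcases lt_or_ge 0 t with htp | htn
      · nlinarith [mul_pos htp (sub_pos.mpr hax'), mul_nonneg hs (sub_pos.mpr hby').le]
      · have ht0 : t = 0 := le_antisymm htn ht
        have hs1 : s = 1 := by linarith
        rw [ht0, hs1]; linarith
    linarith
  · -- rW-condition
    intro x hx
    obtain ⟨hx1, hx2⟩ : x ∈ closure (plaquette φ E r) ∧ x ∉ interior (plaquette φ E r) := hx
    set S : Set (Fin 2 → ℝ) := {y | wulffBall φ y r ⊆ E} with hSdef
    set K : Set (Fin 2 → ℝ) := {v | φ v ≤ r} with hKdef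
    have hKclosed : IsClosed K := by
      have : K = φ ⁻¹' Iic r := rfl
      rw [this]; exact isClosed_Iic.preimage hcont
    obtain ⟨m, hm, hmle⟩ := PlaqAux.exists_lower_bound hφ
    have hKcomp : IsCompact K := by
      apply (isCompact_closedBall (0 : Fin 2 → ℝ) (r / m)).of_isClosed_subset hKclosed
      intro v hv
      have h1 : m * ‖v‖ ≤ φ v := hmle v
      have h2 : φ v ≤ r := hv
      rw [Metric.mem_closedBall, dist_zero_right]
      rw [le_div_iff₀ hm]
      nlinarith
    have hSclosed : IsClosed S := by
      apply isClosed_of_closure_subset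
      intro y hy z hz
      have hzφ : φ (z - y) < r := hz
      set C := φ (Pi.single (0 : Fin 2) (1:ℝ)) + φ (Pi.single (1 : Fin 2) (1:ℝ)) with hCd
      have hC0 : 0 ≤ C := by
        have := hφ.nonneg (Pi.single (0 : Fin 2) (1:ℝ))
        have := hφ.nonneg (Pi.single (1 : Fin 2) (1:ℝ))
        positivity
      obtain ⟨y', hy'S, hyy'⟩ :=
        Metric.mem_closure_iff.mp hy ((r - φ (z - y)) / (C + 1)) (div_pos (by linarith) (by linarith))
      apply hy'S
      show φ (z - y') < r
      have h1 : φ (z - y') ≤ φ (z - y) + φ (y - y') := PlaqAux.norm_sub_le hφ z y y'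
      have h2 : φ (y - y') ≤ C * ‖y - y'‖ := PlaqAux.le_C_norm hφ (y - y')
      have h3 : ‖y - y'‖ < (r - φ (z - y)) / (C + 1) := by
        rwa [← dist_eq_norm]
      have h4 : (0:ℝ) < C + 1 := by linarith
      have h5 : C * ‖y - y'‖ < r - φ (z - y) := by
        have h6 : ‖y - y'‖ * (C + 1) < r - φ (z - y) := by
          rw [← lt_div_iff₀ h4]; exact h3
        nlinarith [norm_nonneg (y - y')]
      linarith
    have hSK : IsClosed (S + K) := hSclosed.add_right_of_isCompact hKcomp
    have hPsub : plaquette φ E r ⊆ S + K := by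
      rw [hplaq]
      intro a ha
      simp only [mem_iUnion] at ha
      obtain ⟨y, hyE, hay⟩ := ha
      rw [Set.mem_add]
      exact ⟨y, hyE, a - y, show φ (a - y) ≤ r from le_of_lt hay, by abel⟩
    have hxcl : x ∈ S + K := closure_minimal hPsub hSK hx1
    rw [Set.mem_add] at hxcl
    obtain ⟨y, hyS, v, hvK, hyv⟩ := hxcl
    have hballP : wulffBall φ y r ⊆ plaquette φ E r := by
      intro z hz
      rw [hplaq]
      exact mem_iUnion.mpr ⟨y, mem_iUnion.mpr ⟨hyS, hz⟩⟩
    have hxy : φ (x - y) = r := by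
      have hxv : x - y = v := by rw [← hyv]; abel
      have h1 : φ (x - y) ≤ r := by rw [hxv]; exact hvK
      rcases h1.lt_or_eq with h | h
      · exfalso
        apply hx2
        exact interior_maximal hballP (PlaqAux.wulff_open hφ y r) h
      · exact h
    have hf : Continuous (fun t : ℝ => y + t • (x - y)) := by
      continuity
    refine ⟨y, hballP, ?_, ?_⟩
    · -- x ∈ closure of the ball
      have htend : Tendsto (fun t : ℝ => y + t • (x - y)) (nhdsWithin 1 (Iio 1)) (nhds x) := by
        have h := (hf.tendsto 1).mono_left (nhdsWithin_le_nhds (s := Iio 1))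
        simpa using h
      apply mem_closure_of_tendsto htend
      filter_upwards [Ioo_mem_nhdsLT_of_mem (show (1:ℝ) ∈ Ioc 0 1 by constructor <;> norm_num)]
        with t ht
      show φ (y + t • (x - y) - y) < r
      have : y + t • (x - y) - y = t • (x - y) := by abel
      rw [this, hφ.smul_eq, abs_of_pos ht.1, hxy]
      nlinarith [ht.1, ht.2]
    · -- x ∉ interior of the ball
      suffices hcc : x ∈ closure (wulffBall φ y r)ᶜ by
        rw [closure_compl] at hcc; exact hcc
      have htend : Tendsto (fun t : ℝ => y + t • (x - y)) (nhdsWithin 1 (Ioi 1)) (nhds x) := by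
        have h := (hf.tendsto 1).mono_left (nhdsWithin_le_nhds (s := Ioi 1))
        simpa using h
      apply mem_closure_of_tendsto htend
      filter_upwards [Ioo_mem_nhdsGT_of_mem (show (1:ℝ) ∈ Ico 1 2 by constructor <;> norm_num)]
        with t ht
      show ¬ φ (y + t • (x - y) - y) < r
      have heq : y + t • (x - y) - y = t • (x - y) := by abel
      rw [heq, hφ.smul_eq, abs_of_pos (by linarith [ht.1] : (0:ℝ) < t), hxy]
      push_neg
      nlinarith [ht.1]


end
end

section
/- Let φ be a norm on ℝ² and let Ω ⊆ ℝ² be a bounded, strictly convex open set. Then there exists a unique Wulff ball of radius R_Ω contained in Ω, i.e. there is exactly one x ∈ Ω with W_{R_Ω}(x) ⊆ Ω, and moreover Ω^{R_Ω} = W_{R_Ω}(x) for this x. -/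
open MeasureTheory Set ENNReal Filter

noncomputable section

namespace WulffAux

variable {φ : (Fin 2 → ℝ) → ℝ}

lemma zero' (hφ : IsNorm φ) : φ 0 = 0 := (hφ.eq_zero_iff 0).mpr rfl

lemma pos' (hφ : IsNorm φ) {v : Fin 2 → ℝ} (hv : v ≠ 0) : 0 < φ v :=
  lt_of_le_of_ne (hφ.nonneg v) fun h => hv ((hφ.eq_zero_iff v).mp h.symm)

lemma neg' (hφ : IsNorm φ) (v : Fin 2 → ℝ) : φ (-v) = φ v := by
  have := hφ.smul_eq (-1) v
  simpa using this

lemma exists_upper (hφ : IsNorm φ) : ∃ K > 0, ∀ v, φ v ≤ K * ‖v‖ := by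
  refine ⟨φ (Pi.single 0 1) + φ (Pi.single 1 1), ?_, ?_⟩
  · have h0 : (Pi.single 0 1 : Fin 2 → ℝ) ≠ 0 := by
      intro h
      have := congrFun h 0
      simp at this
    have h1 := pos' hφ h0
    have h2 := hφ.nonneg (Pi.single 1 1)
    linarith
  · intro v
    have hv : v = v 0 • (Pi.single 0 1 : Fin 2 → ℝ) + v 1 • (Pi.single 1 1 : Fin 2 → ℝ) := by
      funext i
      fin_cases i <;> simp
    have hle : φ v ≤ |v 0| * φ (Pi.single 0 1) + |v 1| * φ (Pi.single 1 1) := by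
      calc φ v = φ (v 0 • (Pi.single 0 1 : Fin 2 → ℝ) + v 1 • (Pi.single 1 1 : Fin 2 → ℝ)) := by rw [← hv]
        _ ≤ φ (v 0 • (Pi.single 0 1 : Fin 2 → ℝ)) + φ (v 1 • (Pi.single 1 1 : Fin 2 → ℝ)) := hφ.add_le _ _
        _ = _ := by rw [hφ.smul_eq, hφ.smul_eq]
    have h0 : |v 0| ≤ ‖v‖ := by simpa [Real.norm_eq_abs] using norm_le_pi_norm v 0
    have h1 : |v 1| ≤ ‖v‖ := by simpa [Real.norm_eq_abs] using norm_le_pi_norm v 1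
    have e0 := hφ.nonneg (Pi.single 0 1)
    have e1 := hφ.nonneg (Pi.single 1 1)
    nlinarith [abs_nonneg (v 0), abs_nonneg (v 1)]

lemma abs_sub_le' (hφ : IsNorm φ) (x y : Fin 2 → ℝ) : |φ x - φ y| ≤ φ (x - y) := by
  rw [abs_sub_le_iff]
  constructor
  · have := hφ.add_le (x - y) y
    simp only [sub_add_cancel] at this
    linarith
  · have := hφ.add_le (y - x) x
    simp only [sub_add_cancel] at this
    have hneg : φ (y - x) = φ (x - y) := by rw [← neg_sub x y, neg' hφ]
    linarith

lemma continuous' (hφ : IsNorm φ) : Continuous φ := by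
  obtain ⟨K, hK, hKle⟩ := exists_upper hφ
  have : LipschitzWith K.toNNReal φ := by
    apply LipschitzWith.of_dist_le_mul
    intro x y
    rw [Real.dist_eq, dist_eq_norm, Real.coe_toNNReal K hK.le]
    exact (abs_sub_le' hφ x y).trans (hKle _)
  exact this.continuous

lemma exists_lower (hφ : IsNorm φ) : ∃ c > 0, ∀ v, c * ‖v‖ ≤ φ v := by
  have hcont : Continuous φ := continuous' hφ
  have hne : (Metric.sphere (0 : Fin 2 → ℝ) 1).Nonempty :=
    NormedSpace.sphere_nonempty.mpr zero_le_one
  obtain ⟨u, hu, humin⟩ := (isCompact_sphere (0 : Fin 2 → ℝ) 1).exists_isMinOn hne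
    hcont.continuousOn
  have hu1 : ‖u‖ = 1 := by simpa using hu
  have hu0 : u ≠ 0 := by
    intro h
    rw [h] at hu1
    simp at hu1
  refine ⟨φ u, pos' hφ hu0, fun v => ?_⟩
  rcases eq_or_ne v 0 with rfl | hv
  · simp [zero' hφ]
  · have hnv : 0 < ‖v‖ := norm_pos_iff.mpr hv
    have hmem : ‖v‖⁻¹ • v ∈ Metric.sphere (0 : Fin 2 → ℝ) 1 := by
      simp [norm_smul, abs_of_pos (inv_pos.mpr hnv), inv_mul_cancel₀ hnv.ne']
    have hmin : φ u ≤ φ (‖v‖⁻¹ • v) := humin hmem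
    have h2 : φ (‖v‖⁻¹ • v) = ‖v‖⁻¹ * φ v := by
      rw [hφ.smul_eq, abs_of_pos (inv_pos.mpr hnv)]
    rw [h2] at hmin
    calc φ u * ‖v‖ ≤ (‖v‖⁻¹ * φ v) * ‖v‖ := by nlinarith
      _ = φ v := by field_simp

lemma mem_closure_of_le (hφ : IsNorm φ) {Ω : Set (Fin 2 → ℝ)} {x v : Fin 2 → ℝ} {R : ℝ}
    (hR : 0 < R) (hW : wulffBall φ x R ⊆ Ω) (hv : φ v ≤ R) : x + v ∈ closure Ω := by
  rw [Metric.mem_closure_iff]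
  intro ε hε
  set s := ε / (‖v‖ + 1) with hs
  have hs0 : 0 < s := by positivity
  set t := 1 - min (1/2) s with ht
  have hmin : 0 < min (1/2) s := lt_min (by norm_num) hs0
  have hmin2 : min (1/2) s ≤ 1/2 := min_le_left _ _
  have ht1 : t < 1 := by rw [ht]; linarith
  have ht0 : 0 ≤ t := by rw [ht]; linarith
  refine ⟨x + t • v, hW ?_, ?_⟩
  · show φ (x + t • v - x) < R
    rw [add_sub_cancel_left, hφ.smul_eq, abs_of_nonneg ht0]
    calc t * φ v ≤ t * R := by nlinarith [hφ.nonneg v]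
      _ < 1 * R := by nlinarith
      _ = R := one_mul R
  · rw [dist_eq_norm]
    have heq : x + v - (x + t • v) = (1 - t) • v := by module
    rw [heq, norm_smul, Real.norm_eq_abs, abs_of_nonneg (by linarith)]
    have h1 : 1 - t = min (1/2) s := by rw [ht]; ring
    have h2 : 1 - t ≤ s := h1 ▸ min_le_right _ _
    have hnv : 0 ≤ ‖v‖ := norm_nonneg v
    calc (1 - t) * ‖v‖ ≤ s * ‖v‖ := by nlinarith
      _ < ε := by
        rw [hs, div_mul_eq_mul_div, div_lt_iff₀ (by positivity)]
        nlinarith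

lemma seg_not_mem {Ω : Set (Fin 2 → ℝ)} (hΩopen : IsOpen Ω) (hΩconv : Convex ℝ Ω)
    {a b : Fin 2 → ℝ} (ha : a ∈ closure Ω) (hb : b ∈ closure Ω) {s : ℝ}
    (hs0 : 0 < s) (hs1 : s < 1) (hw : (1 - s) • a + s • b ∉ Ω) :
    ∀ t : ℝ, 0 ≤ t → t ≤ 1 → (1 - t) • a + t • b ∉ Ω := by
  intro t ht0 ht1 hu
  have hint : interior Ω = Ω := hΩopen.interior_eq
  rcases lt_trichotomy t s with hts | rfl | hst
  · have h1t : (0:ℝ) < 1 - t := by linarith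
    have hr0 : 0 < (s - t) / (1 - t) := div_pos (by linarith) h1t
    have hr1 : (s - t) / (1 - t) < 1 := (div_lt_one h1t).mpr (by linarith)
    have h1t' : (1:ℝ) - t ≠ 0 := h1t.ne'
    have key : (1 - s) • a + s • b ∈ openSegment ℝ ((1 - t) • a + t • b) b := by
      refine ⟨1 - (s - t) / (1 - t), (s - t) / (1 - t), by linarith, hr0, by ring, ?_⟩
      match_scalars <;> field_simp <;> ring
    exact hw (hint ▸ hΩconv.openSegment_interior_closure_subset_interior
      (by rwa [hint]) hb key)
  · exact hw hu
  · have hT0 : (0:ℝ) < t := lt_of_le_of_lt hs0.le hst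
    have hr0 : 0 < (t - s) / t := div_pos (by linarith) hT0
    have hr1 : (t - s) / t < 1 := (div_lt_one hT0).mpr (by linarith)
    have hT0' : (t:ℝ) ≠ 0 := hT0.ne'
    have key : (1 - s) • a + s • b ∈ openSegment ℝ ((1 - t) • a + t • b) a := by
      refine ⟨1 - (t - s) / t, (t - s) / t, by linarith, hr0, by ring, ?_⟩
      match_scalars <;> field_simp <;> ring
    exact hw (hint ▸ hΩconv.openSegment_interior_closure_subset_interior
      (by rwa [hint]) ha key)

end WulffAux

open WulffAux

/-- If `Ω ⊆ ℝ²` is a bounded, strictly convex, nonempty open set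
(convex with no nontrivial line segment in its boundary), then there is exactly one
`x` with `W_{R_Ω}(x) ⊆ Ω`; moreover `x ∈ Ω` and `Ω^{R_Ω} = W_{R_Ω}(x)`. -/
theorem strictly_convex_unique_inball (φ : (Fin 2 → ℝ) → ℝ) (hφ : IsNorm φ)
    (Ω : Set (Fin 2 → ℝ)) (hΩopen : IsOpen Ω) (hΩbdd : Bornology.IsBounded Ω)
    (hΩne : Ω.Nonempty) (hΩconv : Convex ℝ Ω)
    (hstrict : ∀ x ∈ frontier Ω, ∀ y ∈ frontier Ω, x ≠ y →
      ¬ segment ℝ x y ⊆ frontier Ω) :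
    (∃! x : Fin 2 → ℝ, wulffBall φ x (maxInradius φ Ω) ⊆ Ω) ∧
    ∀ x : Fin 2 → ℝ, wulffBall φ x (maxInradius φ Ω) ⊆ Ω →
      x ∈ Ω ∧ plaquette φ Ω (maxInradius φ Ω) = wulffBall φ x (maxInradius φ Ω) := by
  obtain ⟨K, hK, hKle⟩ := exists_upper hφ
  obtain ⟨c, hc, hcle⟩ := exists_lower hφ
  set S : Set ℝ := {R | 0 < R ∧ ∃ x, wulffBall φ x R ⊆ Ω} with hSdef
  have hRS : maxInradius φ Ω = sSup S := rfl
  set R := maxInradius φ Ω with hRdef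
  -- every center of a ball is inside the ball
  have hcenter : ∀ (x : Fin 2 → ℝ) (r : ℝ), 0 < r → x ∈ wulffBall φ x r := by
    intro x r hr
    show φ (x - x) < r
    rw [sub_self, zero' hφ]
    exact hr
  -- S is nonempty
  obtain ⟨x0, hx0⟩ := hΩne
  obtain ⟨ε, hε, hball⟩ := Metric.isOpen_iff.mp hΩopen x0 hx0
  have hSne : c * ε ∈ S := by
    refine ⟨by positivity, x0, fun y hy => hball ?_⟩
    have hy' : φ (y - x0) < c * ε := hy
    have h1 := hcle (y - x0)
    rw [Metric.mem_ball, dist_eq_norm]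
    nlinarith
  -- S is bounded above
  obtain ⟨M, hM⟩ := hΩbdd.subset_ball 0
  have hSbdd : BddAbove S := by
    refine ⟨4 * M * K, fun r hr => ?_⟩
    obtain ⟨hr0, x, hx⟩ := hr
    set u : Fin 2 → ℝ := fun _ => (1:ℝ) with hu
    have hone : ‖u‖ = 1 := by
      rw [hu, pi_norm_const, norm_one]
    have hymem : x + (r / (2 * K)) • u ∈ wulffBall φ x r := by
      show φ (x + (r / (2 * K)) • _ - x) < r
      rw [add_sub_cancel_left, hφ.smul_eq, abs_of_pos (by positivity)]
      have := hKle u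
      rw [hone, mul_one] at this
      calc r / (2 * K) * φ _ ≤ r / (2 * K) * K := by
            apply mul_le_mul_of_nonneg_left this (by positivity)
        _ = r / 2 := by field_simp
        _ < r := by linarith
    have hxΩ : x ∈ Metric.ball (0 : Fin 2 → ℝ) M := hM (hx (hcenter x r hr0))
    have hyΩ : x + (r / (2 * K)) • u ∈ Metric.ball (0 : Fin 2 → ℝ) M :=
      hM (hx hymem)
    rw [Metric.mem_ball, dist_zero_right] at hxΩ hyΩ
    have hdist : ‖x + (r / (2 * K)) • u - x‖ = r / (2 * K) := by
      rw [add_sub_cancel_left, norm_smul, Real.norm_eq_abs, abs_of_pos (by positivity), hone,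
        mul_one]
    have htri := norm_sub_le (x + (r / (2 * K)) • u) x
    rw [hdist] at htri
    have h2M : r / (2 * K) < 2 * M := by linarith
    rw [div_lt_iff₀ (by positivity)] at h2M
    linarith
  have hR0 : 0 < R := lt_of_lt_of_le (by positivity) (hRS ▸ le_csSup hSbdd hSne)
  -- a maximizing sequence
  have hrx : ∀ k : ℕ, ∃ r, (R - 1 / (k + 1) < r) ∧ 0 < r ∧ ∃ x, wulffBall φ x r ⊆ Ω := by
    intro k
    have hlt : R - 1 / ((k : ℝ) + 1) < sSup S := by
      rw [← hRS]
      have : 0 < 1 / ((k : ℝ) + 1) := by positivity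
      linarith
    obtain ⟨r, hrS, hr⟩ := exists_lt_of_lt_csSup ⟨_, hSne⟩ hlt
    exact ⟨r, hr, hrS.1, hrS.2⟩
  choose rr hrgt hrpos xx hW using hrx
  have hxmem : ∀ k, xx k ∈ closure Ω := fun k =>
    subset_closure (hW k (hcenter (xx k) (rr k) (hrpos k)))
  obtain ⟨a, -, σ, hσmono, hσtend⟩ := hΩbdd.isCompact_closure.tendsto_subseq hxmem
  -- the Wulff ball of radius R around a is contained in Ω
  have hWa : wulffBall φ a R ⊆ Ω := by
    intro y hy
    have hy' : φ (y - a) < R := hy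
    set δ := R - φ (y - a) with hδdef
    have hδ : 0 < δ := by rw [hδdef]; linarith
    obtain ⟨N1, hN1⟩ := Metric.tendsto_atTop.mp hσtend (δ / (2 * K)) (by positivity)
    obtain ⟨N2, hN2⟩ := exists_nat_one_div_lt (show (0:ℝ) < δ / 2 by positivity)
    set k := max N1 N2 with hk
    have h1 : dist (xx (σ k)) a < δ / (2 * K) := hN1 k (le_max_left _ _)
    have hσk : (N2 : ℝ) ≤ (σ k : ℝ) := by
      exact_mod_cast (le_max_right N1 N2).trans hσmono.le_apply
    have h2 : 1 / ((σ k : ℝ) + 1) < δ / 2 := by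
      calc 1 / ((σ k : ℝ) + 1) ≤ 1 / ((N2 : ℝ) + 1) := by
            apply one_div_le_one_div_of_le (by positivity) (by linarith)
        _ < δ / 2 := hN2
    have hφya : φ (y - xx (σ k)) ≤ φ (y - a) + φ (a - xx (σ k)) := by
      have := hφ.add_le (y - a) (a - xx (σ k))
      simpa [sub_add_sub_cancel] using this
    have hKb : φ (a - xx (σ k)) ≤ K * ‖a - xx (σ k)‖ := hKle _
    have hdista : ‖a - xx (σ k)‖ = dist (xx (σ k)) a := by
      rw [dist_eq_norm, norm_sub_rev]
    have hsmall : K * ‖a - xx (σ k)‖ < δ / 2 := by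
      rw [hdista]
      calc K * dist (xx (σ k)) a < K * (δ / (2 * K)) :=
            mul_lt_mul_of_pos_left h1 hK
        _ = δ / 2 := by field_simp
    have hrk : R - δ / 2 < rr (σ k) := by
      have := hrgt (σ k)
      linarith
    exact hW (σ k) (show φ (y - xx (σ k)) < rr (σ k) by
      have : φ (y - xx (σ k)) < R - δ / 2 := by
        have hyδ : φ (y - a) = R - δ := by rw [hδdef]; ring
        linarith
      linarith)
  -- uniqueness of the center
  have key : ∀ p q : Fin 2 → ℝ, wulffBall φ p R ⊆ Ω → wulffBall φ q R ⊆ Ω → p = q := by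
    intro p q hp hq
    by_contra hpq
    set m := (2⁻¹ : ℝ) • (p + q) with hm
    -- the closed Wulff ball around m is inside Ω
    have hsub : ∀ z, φ (z - m) ≤ R → z ∈ Ω := by
      intro z hz
      by_contra hzΩ
      have hac : p + (z - m) ∈ closure Ω := mem_closure_of_le hφ hR0 hp hz
      have hbc : q + (z - m) ∈ closure Ω := mem_closure_of_le hφ hR0 hq hz
      have hzeq : (1 - 2⁻¹ : ℝ) • (p + (z - m)) + (2⁻¹ : ℝ) • (q + (z - m)) = z := by
        rw [hm]
        match_scalars <;> ring
      have hw' : (1 - 2⁻¹ : ℝ) • (p + (z - m)) + (2⁻¹ : ℝ) • (q + (z - m)) ∉ Ω := by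
        rw [hzeq]; exact hzΩ
      have hnot := seg_not_mem hΩopen hΩconv hac hbc (by norm_num) (by norm_num) hw'
      have hab : p + (z - m) ≠ q + (z - m) := by
        intro h
        exact hpq (by
          have := add_right_cancel h
          exact this)
      have haΩ : p + (z - m) ∉ Ω := by
        have := hnot 0 le_rfl zero_le_one
        simpa using this
      have hbΩ : q + (z - m) ∉ Ω := by
        have := hnot 1 zero_le_one le_rfl
        simpa using this
      have hfr : frontier Ω = closure Ω \ Ω := by
        rw [hΩopen.frontier_eq]
      have hafr : p + (z - m) ∈ frontier Ω := by rw [hfr]; exact ⟨hac, haΩ⟩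
      have hbfr : q + (z - m) ∈ frontier Ω := by rw [hfr]; exact ⟨hbc, hbΩ⟩
      refine hstrict _ hafr _ hbfr hab ?_
      intro w hw
      obtain ⟨p', q', hp', hq', hpq', rfl⟩ := hw
      rw [hfr]
      refine ⟨hΩconv.closure.segment_subset hac hbc ⟨p', q', hp', hq', hpq', rfl⟩, ?_⟩
      have hp'eq : p' = 1 - q' := by linarith
      rw [hp'eq]
      exact hnot q' hq' (by linarith)
    -- enlarge the ball slightly
    set Kc : Set (Fin 2 → ℝ) := {z | φ (z - m) ≤ R} with hKcdef
    have hKcl : IsClosed Kc :=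
      isClosed_le ((continuous' hφ).comp (continuous_id.sub continuous_const))
        continuous_const
    have hKcpt : IsCompact Kc := by
      refine (isCompact_closedBall m (R / c)).of_isClosed_subset hKcl ?_
      intro z hz
      have h1 := hcle (z - m)
      have h2 : φ (z - m) ≤ R := hz
      rw [Metric.mem_closedBall, dist_eq_norm, le_div_iff₀ hc]
      nlinarith
    obtain ⟨δ, hδ, hthick⟩ := hKcpt.exists_thickening_subset_open hΩopen
      (fun z hz => hsub z hz)
    have hmem' : R + c * δ / 2 ∈ S := by
      refine ⟨by positivity, m, fun z hz => ?_⟩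
      have hz' : φ (z - m) < R + c * δ / 2 := hz
      rcases le_or_gt (φ (z - m)) R with h | h
      · exact hsub z h
      · set R' := φ (z - m) with hR'def
        have hR'0 : 0 < R' := lt_trans hR0 h
        have hzKc : m + (R / R') • (z - m) ∈ Kc := by
          show φ (m + (R / R') • (z - m) - m) ≤ R
          rw [add_sub_cancel_left, hφ.smul_eq, abs_of_pos (div_pos hR0 hR'0), ← hR'def]
          rw [div_mul_cancel₀ _ hR'0.ne']
        refine hthick (Metric.mem_thickening_iff.mpr ⟨_, hzKc, ?_⟩)
        rw [dist_eq_norm]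
        have heq : z - (m + (R / R') • (z - m)) = (1 - R / R') • (z - m) := by module
        have hRle : R / R' ≤ 1 := (div_le_one hR'0).mpr h.le
        rw [heq, norm_smul, Real.norm_eq_abs, abs_of_nonneg (by linarith)]
        have hn1 : ‖z - m‖ ≤ R' / c := by
          have := hcle (z - m)
          rw [le_div_iff₀ hc]
          nlinarith
        have hfin : (1 - R / R') * (R' / c) < δ := by
          have heq2 : (1 - R / R') * (R' / c) = (R' - R) / c := by
            field_simp
          rw [heq2, div_lt_iff₀ hc]
          nlinarith
        nlinarith [norm_nonneg (z - m)]
    have hle := le_csSup hSbdd hmem'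
    rw [← hRS] at hle
    nlinarith
  refine ⟨⟨a, hWa, fun y hy => key y a hy hWa⟩, fun x hx => ?_⟩
  refine ⟨hx (hcenter x R hR0), ?_⟩
  rw [plaquette, if_neg hR0.ne']
  ext z
  simp only [Set.mem_iUnion]
  constructor
  · rintro ⟨y, hyW, hzy⟩
    rwa [key y x hyW hx] at hzy
  · intro hz
    exact ⟨x, hx, hz⟩

end
end
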